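/- arXiv:2002.05215 — 5 statements merged into one kernel-verified Lean document; each statement's English description precedes it below -/
import Mathlib

section
/- Let a, b, ε be real numbers with a > 0, b ≥ 0, c := log a − b/a ≥ 0 and ε ∈ (0, 1/e). Then the equation a·y − b = ε·e^y has exactly two real solutions y₁ < y₂; the smaller one satisfies y₁ = d + b/a for some d ∈ (0,1); and the larger one satisfies y₂ = −log ε + log a + log(−log ε + log a − b/a) + o(1), where the o(1) term tends to 0 as ε·e^{−c} → 0, uniformly over all admissible triples (a,b,ε): for every δ > 0 there exists η > 0 such that whenever a > 0, b ≥ 0, c = log a − b/a ≥ 0, ε ∈ (0,1/e) and ε·e^{−c} < η, one has |y₂ − (−log ε + log a + log(−log ε + log a − b/a))| < δ. -/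
open Set

open Real


private noncomputable def lamf : ℝ → ℝ := fun x => x * Real.exp (-x)

private lemma lamf_def (x : ℝ) : lamf x = x * Real.exp (-x) := rfl

private lemma lam_hasDeriv (x : ℝ) :
    HasDerivAt lamf ((1 - x) * Real.exp (-x)) x := by
  have h1 : HasDerivAt (fun x : ℝ => Real.exp (-x)) (-Real.exp (-x)) x := by
    simpa [Function.comp_def] using (Real.hasDerivAt_exp (-x)).comp x ((hasDerivAt_id x).neg)
  have this : HasDerivAt (fun y : ℝ => id y * Real.exp (-y)) (1 * Real.exp (-x) + id x * -Real.exp (-x)) x :=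
    (hasDerivAt_id x).mul h1
  convert this using 1
  · rfl
  simp only [id]
  ring

private lemma lam_cont : Continuous lamf :=
  continuous_id.mul (Real.continuous_exp.comp continuous_neg)

private lemma lam_mono : StrictMonoOn lamf (Set.Iic 1) := by
  apply strictMonoOn_of_deriv_pos (convex_Iic 1) lam_cont.continuousOn
  intro x hx
  rw [interior_Iic] at hx
  rw [(lam_hasDeriv x).deriv]
  exact mul_pos (by linarith [hx.out]) (Real.exp_pos _)

private lemma lam_anti : StrictAntiOn lamf (Set.Ici 1) := by
  apply strictAntiOn_of_deriv_neg (convex_Ici 1) lam_cont.continuousOn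
  intro x hx
  rw [interior_Ici] at hx
  rw [(lam_hasDeriv x).deriv]
  exact mul_neg_of_neg_of_pos (by linarith [hx.out]) (Real.exp_pos _)

private lemma lam_two (t : ℝ) (ht : t ∈ Set.Ioo 0 (Real.exp 1)⁻¹) :
    ∃ x₁ x₂ : ℝ, x₁ ∈ Set.Ioo (0:ℝ) 1 ∧ 1 < x₂ ∧
      {x : ℝ | x = t * Real.exp x} = {x₁, x₂} := by
  obtain ⟨ht0, ht1⟩ := ht
  have hf1 : lamf 1 = (Real.exp 1)⁻¹ := by simp [lamf_def, Real.exp_neg]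
  have hf0 : lamf 0 = 0 := by simp [lamf_def]
  -- existence of x₁ in (0,1)
  have h01 : t ∈ Set.Ioo (lamf 0) (lamf 1) := by
    rw [hf0, hf1]; exact ⟨ht0, ht1⟩
  obtain ⟨x₁, hx₁, hfx₁⟩ := intermediate_value_Ioo (by norm_num : (0:ℝ) ≤ 1)
    lam_cont.continuousOn h01
  -- existence of x₂ in (1, M)
  obtain ⟨M, hM⟩ : ∃ M : ℝ, M = 4 / t + 1 := ⟨_, rfl⟩
  have ht4 : 0 < 4 / t := by positivity
  have hM1 : 1 ≤ M := by linarith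
  have hfM : lamf M < t := by
    have hexp : M * M / 4 < Real.exp M := by
      have h2 : M / 2 + 1 ≤ Real.exp (M / 2) := Real.add_one_le_exp (M / 2)
      have hee : Real.exp (M/2) * Real.exp (M/2) = Real.exp M := by
        rw [← Real.exp_add]; ring_nf
      nlinarith [Real.exp_pos (M/2)]
    have hMeq : lamf M = M / Real.exp M := by
      rw [lamf_def, Real.exp_neg]; ring
    rw [hMeq, div_lt_iff₀ (Real.exp_pos M)]
    have h4t : 4 / t * t = 4 := by field_simp
    nlinarith [Real.exp_pos M]
  have h1M : t ∈ Set.Ioo (lamf M) (lamf 1) := ⟨hfM, by rwa [hf1]⟩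
  obtain ⟨x₂, hx₂, hfx₂⟩ := intermediate_value_Ioo' hM1 lam_cont.continuousOn h1M
  refine ⟨x₁, x₂, hx₁, hx₂.1, ?_⟩
  have hiff : ∀ x : ℝ, x = t * Real.exp x ↔ lamf x = t := by
    intro x
    rw [lamf_def, Real.exp_neg, ← div_eq_mul_inv]
    exact (div_eq_iff (Real.exp_ne_zero x)).symm
  ext x
  simp only [Set.mem_setOf_eq, Set.mem_insert_iff, Set.mem_singleton_iff, hiff]
  constructor
  · intro h
    rcases le_total x 1 with hle | hge
    · exact Or.inl (lam_mono.injOn hle (le_of_lt hx₁.2) (by rw [h, hfx₁]))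
    · exact Or.inr (lam_anti.injOn hge (le_of_lt hx₂.1) (by rw [h, hfx₂]))
  · rintro (rfl | rfl)
    · exact hfx₁
    · exact hfx₂

private lemma lam_key (a b ε : ℝ) (ha : 0 < a) (hc : 0 ≤ Real.log a - b / a)
    (hε : ε ∈ Set.Ioo 0 (Real.exp 1)⁻¹) :
    ∃ x₁ x₂ : ℝ, x₁ ∈ Set.Ioo (0:ℝ) 1 ∧ 1 < x₂ ∧
      x₂ = ε * Real.exp (-(Real.log a - b / a)) * Real.exp x₂ ∧
      {y : ℝ | a * y - b = ε * Real.exp y} = {x₁ + b / a, x₂ + b / a} := by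
  obtain ⟨hε0, hε1⟩ := hε
  have htpos : 0 < ε * Real.exp (-(Real.log a - b / a)) := by positivity
  have htle : ε * Real.exp (-(Real.log a - b / a)) ≤ ε := by
    have h1 : Real.exp (-(Real.log a - b / a)) ≤ 1 := by
      rw [Real.exp_le_one_iff]; linarith
    nlinarith
  obtain ⟨x₁, x₂, hx₁, hx₂, hS⟩ := lam_two (ε * Real.exp (-(Real.log a - b / a)))
    ⟨htpos, lt_of_le_of_lt htle hε1⟩
  rw [Set.ext_iff] at hS
  have hSx₂ : x₂ = ε * Real.exp (-(Real.log a - b / a)) * Real.exp x₂ := by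
    have := (hS x₂).mpr (by simp)
    exact this
  have hexp : ∀ y : ℝ, ε * Real.exp (-(Real.log a - b / a)) * Real.exp (y - b / a)
      = ε * Real.exp y / a := by
    intro y
    rw [mul_assoc, ← Real.exp_add,
      show -(Real.log a - b / a) + (y - b / a) = y - Real.log a by ring,
      Real.exp_sub, Real.exp_log ha]
    ring
  have hiff : ∀ y : ℝ, (a * y - b = ε * Real.exp y) ↔
      (y - b / a = ε * Real.exp (-(Real.log a - b / a)) * Real.exp (y - b / a)) := by
    intro y
    rw [hexp y, eq_div_iff ha.ne']
    have h2 : (y - b / a) * a = a * y - b := by field_simp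
    rw [h2]
  refine ⟨x₁, x₂, hx₁, hx₂, hSx₂, ?_⟩
  ext y
  simp only [Set.mem_setOf_eq, Set.mem_insert_iff, Set.mem_singleton_iff, hiff y]
  have h3 := hS (y - b / a)
  simp only [Set.mem_setOf_eq, Set.mem_insert_iff, Set.mem_singleton_iff] at h3
  rw [h3]; simp only [sub_eq_iff_eq_add]

private lemma lam_logle (x : ℝ) (hx : 1 ≤ x) : Real.log x ≤ 2 * Real.sqrt x - 2 := by
  have hs : 0 < Real.sqrt x := Real.sqrt_pos.mpr (by linarith)
  have h1 : Real.log (Real.sqrt x) ≤ Real.sqrt x - 1 := Real.log_le_sub_one_of_pos hs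
  have h2 : Real.log (Real.sqrt x) = Real.log x / 2 := Real.log_sqrt (by linarith)
  linarith

private lemma lam_asymp (δ : ℝ) (hδ : 0 < δ) :
    ∃ η : ℝ, 0 < η ∧ ∀ t x : ℝ, 0 < t → t < η → 1 < x → x = t * Real.exp x →
      |x - (-Real.log t + Real.log (-Real.log t))| < δ := by
  refine ⟨Real.exp (-(max 2 (4 / δ ^ 2))), Real.exp_pos _, ?_⟩
  intro t x ht0 htη hx1 hxt
  set L : ℝ := -Real.log t with hLdef
  have hLgt : max 2 (4 / δ ^ 2) < L := by
    have := Real.log_lt_log ht0 htη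
    rw [Real.log_exp] at this
    simp only [hLdef]
    linarith
  have hL2 : 2 < L := lt_of_le_of_lt (le_max_left _ _) hLgt
  have hLδ : 4 / δ ^ 2 < L := lt_of_le_of_lt (le_max_right _ _) hLgt
  have hL0 : 0 < L := by linarith
  have hx0 : 0 < x := by linarith
  -- x - log x = L
  have hlogx : Real.log x = Real.log t + x := by
    rw [hxt]
    rw [Real.log_mul ht0.ne' (Real.exp_ne_zero x), Real.log_exp]
    rw [← hxt]
  have hxL : x = L + Real.log x := by rw [hLdef]; linarith
  have hlogx_pos : 0 < Real.log x := Real.log_pos hx1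
  have hxgtL : L < x := by linarith
  have hloglog : Real.log L < Real.log x := Real.log_lt_log hL0 hxgtL
  have hlower : L + Real.log L < x := by linarith
  -- upper bound: x ≤ 2L
  have hsx : Real.sqrt x * Real.sqrt x = x := Real.mul_self_sqrt hx0.le
  have hlogx_half : Real.log x ≤ x / 2 := by
    have h1 := lam_logle x hx1.le
    nlinarith [sq_nonneg (Real.sqrt x - 2)]
  have hx2L : x ≤ 2 * L := by linarith
  -- x - L - log L = log x - log L = log (x/L) ≤ x/L - 1 = log x / L
  have hdiff : x - (L + Real.log L) = Real.log (x / L) := by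
    rw [Real.log_div hx0.ne' hL0.ne']
    linarith
  have hle1 : Real.log (x / L) ≤ x / L - 1 := Real.log_le_sub_one_of_pos (div_pos hx0 hL0)
  have hxL1 : x / L - 1 = Real.log x / L := by
    field_simp
    linarith
  -- log x ≤ 1 + log L + ... bound log x ≤ 2 * sqrt L
  have hlog2 : Real.log 2 ≤ 1 := by
    have := Real.log_le_sub_one_of_pos (by norm_num : (0:ℝ) < 2)
    linarith
  have hlogLle : Real.log L ≤ 2 * Real.sqrt L - 2 := lam_logle L (by linarith)
  have hlogxle : Real.log x ≤ 2 * Real.sqrt L := by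
    have h2L : Real.log x ≤ Real.log (2 * L) := Real.log_le_log hx0 hx2L
    rw [Real.log_mul (by norm_num) hL0.ne'] at h2L
    linarith
  have hsL : Real.sqrt L * Real.sqrt L = L := Real.mul_self_sqrt hL0.le
  have hsLpos : 0 < Real.sqrt L := Real.sqrt_pos.mpr hL0
  have hsLδ : 2 / δ < Real.sqrt L := by
    rw [show (4 : ℝ) / δ ^ 2 = (2 / δ) ^ 2 by field_simp; ring] at hLδ
    exact (Real.lt_sqrt (by positivity)).mpr hLδ
  have hupper : x - (L + Real.log L) < δ := by
    rw [hdiff]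
    calc Real.log (x / L) ≤ x / L - 1 := hle1
      _ = Real.log x / L := hxL1
      _ ≤ 2 * Real.sqrt L / L := by gcongr
      _ < δ := by
          rw [div_lt_iff₀ hL0]
          have h2 : 2 < δ * Real.sqrt L := by
            rw [div_lt_iff₀ hδ] at hsLδ
            linarith
          have h3 := mul_lt_mul_of_pos_right h2 hsLpos
          have h4 : δ * Real.sqrt L * Real.sqrt L = δ * L := by rw [mul_assoc, hsL]
          linarith
  rw [abs_lt]
  constructor
  · linarith
  · linarith


/-- for `a > 0`, `b ≥ 0`, `c := log a - b/a ≥ 0` and `ε ∈ (0, 1/e)`, the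
equation `a·y - b = ε·e^y` has exactly two real solutions `y₁ < y₂`; the smaller one is
`y₁ = d + b/a` with `d ∈ (0,1)`; and the larger one satisfies
`y₂ = -log ε + log a + log(-log ε + log a - b/a) + o(1)`, the `o(1)` term tending to `0`
as `ε·e^{-c} → 0`, uniformly over all admissible triples `(a, b, ε)`. -/
theorem lambert_two_solutions :
    (∀ a b ε : ℝ, 0 < a → 0 ≤ b → 0 ≤ Real.log a - b / a →
      ε ∈ Set.Ioo 0 (Real.exp 1)⁻¹ →
      ∃ y₁ y₂ : ℝ, y₁ < y₂ ∧
        {y : ℝ | a * y - b = ε * Real.exp y} = {y₁, y₂} ∧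
        y₁ - b / a ∈ Set.Ioo (0 : ℝ) 1) ∧
    (∀ δ : ℝ, 0 < δ → ∃ η : ℝ, 0 < η ∧
      ∀ a b ε y₂ : ℝ, 0 < a → 0 ≤ b → 0 ≤ Real.log a - b / a →
        ε ∈ Set.Ioo 0 (Real.exp 1)⁻¹ →
        ε * Real.exp (-(Real.log a - b / a)) < η →
        (a * y₂ - b = ε * Real.exp y₂ ∧
          ∀ y : ℝ, a * y - b = ε * Real.exp y → y ≤ y₂) →
        |y₂ - (-Real.log ε + Real.log a +
            Real.log (-Real.log ε + Real.log a - b / a))| < δ) := by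
  constructor
  · intro a b ε ha hb hc hε
    obtain ⟨x₁, x₂, hx₁, hx₂, hx₂eq, hSet⟩ := lam_key a b ε ha hc hε
    refine ⟨x₁ + b / a, x₂ + b / a, by linarith [hx₁.2], hSet, ?_⟩
    simpa using hx₁
  · intro δ hδ
    obtain ⟨η, hη, hmain⟩ := lam_asymp δ hδ
    refine ⟨η, hη, ?_⟩
    rintro a b ε y₂ ha hb hc hε htη ⟨hy₂sol, hy₂max⟩
    obtain ⟨x₁, x₂, hx₁, hx₂, hx₂eq, hSet⟩ := lam_key a b ε ha hc hε
    have hmem : x₂ + b / a ∈ {y : ℝ | a * y - b = ε * Real.exp y} := by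
      rw [hSet]; simp
    have hle : x₂ + b / a ≤ y₂ := hy₂max _ hmem
    have hy₂mem : y₂ ∈ ({x₁ + b / a, x₂ + b / a} : Set ℝ) := by
      rw [← hSet]; exact hy₂sol
    have hy₂eq : y₂ = x₂ + b / a := by
      rcases hy₂mem with h | h
      · exfalso; rw [h] at hle; linarith [hx₁.2]
      · exact h
    have h2 := hmain (ε * Real.exp (-(Real.log a - b / a))) x₂ (mul_pos hε.1 (Real.exp_pos _)) htη hx₂
      hx₂eq
    have harg : -Real.log ε + Real.log a - b / a
        = -Real.log (ε * Real.exp (-(Real.log a - b / a))) := by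
      rw [Real.log_mul hε.1.ne' (Real.exp_ne_zero _), Real.log_exp]
      ring
    have h1 : Real.log (-Real.log ε + Real.log a - b / a)
        = Real.log (-Real.log (ε * Real.exp (-(Real.log a - b / a)))) := by rw [harg]
    have key : y₂ - (-Real.log ε + Real.log a +
        Real.log (-Real.log ε + Real.log a - b / a))
        = x₂ - (-Real.log (ε * Real.exp (-(Real.log a - b / a)))
          + Real.log (-Real.log (ε * Real.exp (-(Real.log a - b / a))))) := by
      rw [h1, hy₂eq]
      linarith
    rw [key]
    exact h2
end

section
/- Let b > 0 and let X be a nonnegative random variable with lim_{t→∞} t·P{X > t} = b. Then ψ*(1/t) ~ G*(t) ~ H*(t) ~ b·log t as t → ∞, i.e. each of ψ*(1/t)/(b log t), G*(t)/(b log t) and H*(t)/(b log t) tends to 1 as t → ∞. -/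
open MeasureTheory Filter Set
open scoped Interval

noncomputable section

variable {Ω : Type*} [MeasurableSpace Ω]

/-- `ψ*(s) = s⁻¹ (1 - E e^{-sX})`. -/
def psiStar (P : Measure Ω) (X : Ω → ℝ) (s : ℝ) : ℝ :=
  (1 - ∫ ω, Real.exp (-(s * X ω)) ∂P) / s

/-- `G*(s) = ∫₀^s P{X > y} dy`. -/
def GStar (P : Measure Ω) (X : Ω → ℝ) (s : ℝ) : ℝ :=
  ∫ y in (0 : ℝ)..s, (P {ω | y < X ω}).toReal

/-- `H*(s) = E[X 1_{X ≤ s}]`. -/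
def HStar (P : Measure Ω) (X : Ω → ℝ) (s : ℝ) : ℝ :=
  ∫ ω, (if X ω ≤ s then X ω else 0) ∂P

lemma F_anti (P : Measure Ω) [IsProbabilityMeasure P] (X : Ω → ℝ) :
    Antitone (fun y : ℝ => (P {ω | y < X ω}).toReal) := by
  intro y z hyz
  exact ENNReal.toReal_mono (measure_ne_top _ _)
    (measure_mono (fun ω h => lt_of_le_of_lt hyz h))

lemma F_le_one (P : Measure Ω) [IsProbabilityMeasure P] (X : Ω → ℝ) (y : ℝ) :
    (P {ω | y < X ω}).toReal ≤ 1 := by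
  have := prob_le_one (μ := P) (s := {ω | y < X ω})
  simpa using ENNReal.toReal_mono (by simp) this

lemma G_asymp (P : Measure Ω) [IsProbabilityMeasure P] (X : Ω → ℝ) (b : ℝ) (hb : 0 < b)
    (htail : Tendsto (fun t : ℝ => t * (P {ω | t < X ω}).toReal) atTop (nhds b)) :
    Tendsto (fun t : ℝ => GStar P X t / Real.log t) atTop (nhds b) := by
  set F : ℝ → ℝ := fun y => (P {ω | y < X ω}).toReal with hF
  have hanti : Antitone F := F_anti P X
  have h0 : ∀ y, 0 ≤ F y := fun y => ENNReal.toReal_nonneg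
  have h1 : ∀ y, F y ≤ 1 := F_le_one P X
  have hInt : ∀ a c : ℝ, IntervalIntegrable F volume a c := fun a c =>
    hanti.intervalIntegrable
  rw [Metric.tendsto_nhds]
  intro ε hε
  set ε' := ε / 2 with hε'
  have hε'pos : 0 < ε' := half_pos hε
  have htail' : ∀ᶠ y in atTop, |y * F y - b| < ε' := by
    have := Metric.tendsto_nhds.1 htail ε' hε'pos
    simpa [Real.dist_eq] using this
  obtain ⟨T₀, hT₀⟩ := eventually_atTop.1 htail'
  set T : ℝ := max T₀ 1 with hT
  have hT1 : (1:ℝ) ≤ T := le_max_right _ _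
  have hTpos : (0:ℝ) < T := lt_of_lt_of_le one_pos hT1
  have hbound : ∀ y, T ≤ y → (b - ε') / y ≤ F y ∧ F y ≤ (b + ε') / y := by
    intro y hy
    have hypos : 0 < y := lt_of_lt_of_le hTpos hy
    have := hT₀ y (le_trans (le_max_left _ _) hy)
    have h2 := abs_lt.1 this
    constructor
    · rw [div_le_iff₀ hypos]
      nlinarith [h2.1]
    · rw [le_div_iff₀ hypos]
      nlinarith [h2.2]
  -- integrability of c / y on intervals away from 0
  have hIntc : ∀ c : ℝ, ∀ t : ℝ, T ≤ t → IntervalIntegrable (fun y => c / y) volume T t := by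
    intro c t ht
    apply ContinuousOn.intervalIntegrable
    apply ContinuousOn.div continuousOn_const continuousOn_id
    intro y hy
    rw [Set.uIcc_of_le ht] at hy
    exact ne_of_gt (lt_of_lt_of_le hTpos hy.1)
  have hcint : ∀ c : ℝ, ∀ t : ℝ, T ≤ t →
      ∫ y in T..t, c / y = c * (Real.log t - Real.log T) := by
    intro c t ht
    have h0mem : (0:ℝ) ∉ Set.uIcc T t := by
      rw [Set.uIcc_of_le ht]
      intro h
      exact absurd h.1 (not_le.2 hTpos)
    have : ∫ y in T..t, c * (1 / y) = c * ∫ y in T..t, 1 / y := by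
      exact intervalIntegral.integral_const_mul c _
    rw [show (fun y => c / y) = fun y => c * (1/y) by funext y; ring] at *
    rw [this, integral_one_div h0mem,
      Real.log_div (ne_of_gt (lt_of_lt_of_le hTpos ht)) (ne_of_gt hTpos)]
  -- bounds on GStar for t ≥ T
  have hGbounds : ∀ t, T ≤ t →
      (b - ε') * (Real.log t - Real.log T) ≤ GStar P X t ∧
      GStar P X t ≤ T + (b + ε') * (Real.log t - Real.log T) := by
    intro t ht
    have hsplit : GStar P X t = (∫ y in (0:ℝ)..T, F y) + ∫ y in T..t, F y :=
      (intervalIntegral.integral_add_adjacent_intervals (hInt 0 T) (hInt T t)).symm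
    have h0T_nonneg : 0 ≤ ∫ y in (0:ℝ)..T, F y :=
      intervalIntegral.integral_nonneg hTpos.le (fun y _ => h0 y)
    have h0T_le : (∫ y in (0:ℝ)..T, F y) ≤ T := by
      have : (∫ y in (0:ℝ)..T, F y) ≤ ∫ y in (0:ℝ)..T, (1:ℝ) :=
        intervalIntegral.integral_mono_on hTpos.le (hInt 0 T) intervalIntegrable_const
          (fun y _ => h1 y)
      simpa using this
    have hlow : (b - ε') * (Real.log t - Real.log T) ≤ ∫ y in T..t, F y := by
      calc (b - ε') * (Real.log t - Real.log T) = ∫ y in T..t, (b - ε') / y := by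
            rw [hcint _ _ ht]
        _ ≤ ∫ y in T..t, F y := by
            apply intervalIntegral.integral_mono_on ht (hIntc _ _ ht) (hInt T t)
            intro y hy
            exact (hbound y hy.1).1
    have hhigh : (∫ y in T..t, F y) ≤ (b + ε') * (Real.log t - Real.log T) := by
      calc (∫ y in T..t, F y) ≤ ∫ y in T..t, (b + ε') / y := by
            apply intervalIntegral.integral_mono_on ht (hInt T t) (hIntc _ _ ht)
            intro y hy
            exact (hbound y hy.1).2
        _ = (b + ε') * (Real.log t - Real.log T) := hcint _ _ ht
    constructor
    · rw [hsplit]; linarith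
    · rw [hsplit]; linarith
  -- limits of the bounding functions
  have hloginv : Tendsto (fun t : ℝ => (Real.log t)⁻¹) atTop (nhds 0) :=
    Real.tendsto_log_atTop.inv_tendsto_atTop
  have hlowlim : Tendsto (fun t : ℝ => (b - ε') * (Real.log t - Real.log T) / Real.log t)
      atTop (nhds (b - ε')) := by
    have : Tendsto (fun t : ℝ => (b - ε') * (1 - Real.log T * (Real.log t)⁻¹))
        atTop (nhds ((b - ε') * (1 - Real.log T * 0))) :=
      tendsto_const_nhds.mul (tendsto_const_nhds.sub (tendsto_const_nhds.mul hloginv))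
    simp only [mul_zero, sub_zero, mul_one] at this
    apply this.congr'
    filter_upwards [eventually_gt_atTop 1] with t ht
    have hlogpos : 0 < Real.log t := Real.log_pos ht
    field_simp
  have hhighlim : Tendsto (fun t : ℝ => (T + (b + ε') * (Real.log t - Real.log T)) / Real.log t)
      atTop (nhds (b + ε')) := by
    have : Tendsto (fun t : ℝ => T * (Real.log t)⁻¹ + (b + ε') * (1 - Real.log T * (Real.log t)⁻¹))
        atTop (nhds (T * 0 + (b + ε') * (1 - Real.log T * 0))) :=
      (tendsto_const_nhds.mul hloginv).add
        (tendsto_const_nhds.mul (tendsto_const_nhds.sub (tendsto_const_nhds.mul hloginv)))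
    simp only [mul_zero, sub_zero, mul_one, zero_add] at this
    apply this.congr'
    filter_upwards [eventually_gt_atTop 1] with t ht
    have hlogpos : 0 < Real.log t := Real.log_pos ht
    field_simp
  have hev1 : ∀ᶠ t in atTop, b - ε < (b - ε') * (Real.log t - Real.log T) / Real.log t :=
    hlowlim.eventually_const_lt (by linarith)
  have hev2 : ∀ᶠ t in atTop, (T + (b + ε') * (Real.log t - Real.log T)) / Real.log t < b + ε :=
    hhighlim.eventually_lt_const (by linarith)
  filter_upwards [hev1, hev2, eventually_ge_atTop T, eventually_gt_atTop 1] with t h1' h2' h3' h4'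
  have hlogpos : 0 < Real.log t := Real.log_pos h4'
  obtain ⟨hl, hh⟩ := hGbounds t h3'
  rw [Real.dist_eq, abs_lt]
  have hA : (b - ε') * (Real.log t - Real.log T) / Real.log t ≤ GStar P X t / Real.log t :=
    div_le_div_of_nonneg_right hl hlogpos.le
  have hB : GStar P X t / Real.log t
      ≤ (T + (b + ε') * (Real.log t - Real.log T)) / Real.log t :=
    div_le_div_of_nonneg_right hh hlogpos.le
  constructor
  · linarith
  · linarith

lemma H_eq_G (P : Measure Ω) [IsProbabilityMeasure P] (X : Ω → ℝ)
    (hXm : Measurable X) (hX0 : ∀ ω, 0 ≤ X ω) {t : ℝ} (ht : 0 < t) :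
    HStar P X t = GStar P X t - t * (P {ω | t < X ω}).toReal := by
  set F : ℝ → ℝ := fun y => (P {ω | y < X ω}).toReal with hF
  set f : Ω → ℝ := fun ω => if X ω ≤ t then X ω else 0 with hf
  have hfm : Measurable f := Measurable.ite (measurableSet_le hXm measurable_const)
    hXm measurable_const
  have hfb : ∀ ω, ‖f ω‖ ≤ t := by
    intro ω
    rw [Real.norm_eq_abs, abs_le]
    constructor
    · simp only [hf]; split <;> [linarith [hX0 ω]; linarith]
    · simp only [hf]; split <;> [assumption; exact ht.le]
  have hfint : Integrable f P :=
    (integrable_const t).mono' hfm.aestronglyMeasurable (ae_of_all _ hfb)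
  have hfnn : 0 ≤ᵐ[P] f := ae_of_all _ fun ω => by
    simp only [hf]; split
    · exact hX0 ω
    · exact le_refl 0
  have hlc := hfint.integral_eq_integral_meas_lt hfnn
  have hcong : ∀ y ∈ Set.Ioi (0:ℝ), (P {ω | y < f ω}).toReal
      = Set.indicator (Set.Ioc 0 t) (fun y => F y - F t) y := by
    intro y hy
    replace hy : (0:ℝ) < y := hy
    by_cases hyt : y ≤ t
    · have hsub : {ω | t < X ω} ⊆ {ω | y < X ω} := fun ω h => lt_of_le_of_lt hyt h
      have hset : {ω | y < f ω} = {ω | y < X ω} \ {ω | t < X ω} := by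
        ext ω
        simp only [Set.mem_setOf_eq, Set.mem_diff, hf, not_lt]
        by_cases h : X ω ≤ t
        · simp [h]
        · simp only [if_neg h]
          constructor
          · intro hc; exact absurd hc (not_lt.2 hy.le)
          · intro hc; exact absurd hc.2 (not_le.2 (not_le.1 h))
      have hmeas : (P {ω | y < f ω}) = P {ω | y < X ω} - P {ω | t < X ω} := by
        rw [hset]
        exact measure_diff hsub (hXm measurableSet_Ioi).nullMeasurableSet (measure_ne_top P _)
      rw [hmeas, Set.indicator_of_mem (Set.mem_Ioc.2 ⟨hy, hyt⟩),
        ENNReal.toReal_sub_of_le (measure_mono hsub) (measure_ne_top P _)]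
    · have hset : {ω | y < f ω} = ∅ := by
        ext ω
        simp only [Set.mem_setOf_eq, Set.mem_empty_iff_false, iff_false, not_lt, hf]
        split
        · linarith [not_le.1 hyt]
        · exact hy.le
      rw [hset, Set.indicator_of_notMem (by simp [Set.mem_Ioc]; intro h; linarith [not_le.1 hyt])]
      simp
  have hFintOn : IntegrableOn F (Set.Ioc 0 t) volume :=
    ((F_anti P X).intervalIntegrable (a := 0) (b := t)).1
  have hCintOn : IntegrableOn (fun _ : ℝ => F t) (Set.Ioc 0 t) volume :=
    integrableOn_const measure_Ioc_lt_top.ne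
  calc HStar P X t = ∫ y in Set.Ioi (0:ℝ), (P {ω | y < f ω}).toReal := hlc
    _ = ∫ y in Set.Ioi (0:ℝ), Set.indicator (Set.Ioc 0 t) (fun y => F y - F t) y :=
        setIntegral_congr_fun measurableSet_Ioi hcong
    _ = ∫ y in Set.Ioi (0:ℝ) ∩ Set.Ioc 0 t, (F y - F t) := setIntegral_indicator measurableSet_Ioc
    _ = ∫ y in Set.Ioc (0:ℝ) t, (F y - F t) := by
        rw [Set.inter_eq_self_of_subset_right Set.Ioc_subset_Ioi_self]
    _ = (∫ y in Set.Ioc (0:ℝ) t, F y) - ∫ y in Set.Ioc (0:ℝ) t, F t :=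
        integral_sub hFintOn hCintOn
    _ = GStar P X t - t * F t := by
        rw [setIntegral_const, measureReal_def, Real.volume_Ioc, GStar,
          intervalIntegral.integral_of_le ht.le]
        simp [ENNReal.toReal_ofReal ht.le, smul_eq_mul]
        rfl

lemma psi_integral (P : Measure Ω) [IsProbabilityMeasure P] (X : Ω → ℝ)
    (hXm : Measurable X) (hX0 : ∀ ω, 0 ≤ X ω) {t : ℝ} (ht : 0 < t) :
    psiStar P X (1 / t) = ∫ ω, t * (1 - Real.exp (-(X ω / t))) ∂P := by
  have hexpm : Measurable fun ω => Real.exp (-((1/t) * X ω)) :=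
    (Real.measurable_exp.comp ((hXm.const_mul (1/t)).neg))
  have hexpint : Integrable (fun ω => Real.exp (-((1/t) * X ω))) P := by
    apply (integrable_const (1:ℝ)).mono' hexpm.aestronglyMeasurable
    refine ae_of_all _ fun ω => ?_
    rw [Real.norm_eq_abs, abs_of_pos (Real.exp_pos _), Real.exp_le_one_iff]
    have : 0 ≤ (1/t) * X ω := mul_nonneg (by positivity) (hX0 ω)
    linarith
  rw [psiStar]
  rw [show (1:ℝ) - (∫ ω, Real.exp (-((1/t) * X ω)) ∂P)
      = ∫ ω, (1 - Real.exp (-((1/t) * X ω))) ∂P by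
    rw [integral_sub (integrable_const 1) hexpint]
    simp]
  rw [div_eq_iff (by positivity : (1:ℝ)/t ≠ 0)]
  rw [← integral_mul_const]
  congr 1
  funext ω
  have : -(X ω / t) = -((1/t) * X ω) := by ring
  rw [this]
  field_simp

lemma psi_upper (P : Measure Ω) [IsProbabilityMeasure P] (X : Ω → ℝ)
    (hXm : Measurable X) (hX0 : ∀ ω, 0 ≤ X ω) {t : ℝ} (ht : 0 < t) :
    psiStar P X (1 / t) ≤ HStar P X t + t * (P {ω | t < X ω}).toReal := by
  rw [psi_integral P X hXm hX0 ht]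
  have hgm : Measurable fun ω => t * (1 - Real.exp (-(X ω / t))) :=
    (measurable_const.mul ((measurable_const.sub
      (Real.measurable_exp.comp (hXm.div_const t).neg))))
  have hgb : ∀ ω, ‖t * (1 - Real.exp (-(X ω / t)))‖ ≤ t := by
    intro ω
    have h1 : Real.exp (-(X ω / t)) ≤ 1 := by
      rw [Real.exp_le_one_iff]
      have := hX0 ω
      have : 0 ≤ X ω / t := by positivity
      linarith
    have h2 : 0 < Real.exp (-(X ω / t)) := Real.exp_pos _
    rw [Real.norm_eq_abs, abs_of_nonneg (by nlinarith)]
    nlinarith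
  have hgint : Integrable (fun ω => t * (1 - Real.exp (-(X ω / t)))) P :=
    (integrable_const t).mono' hgm.aestronglyMeasurable (ae_of_all _ hgb)
  have hhm : Measurable fun ω => if X ω ≤ t then X ω else t :=
    Measurable.ite (measurableSet_le hXm measurable_const) hXm measurable_const
  have hhint : Integrable (fun ω => if X ω ≤ t then X ω else t) P := by
    apply (integrable_const t).mono' hhm.aestronglyMeasurable
    refine ae_of_all _ fun ω => ?_
    rw [Real.norm_eq_abs, abs_le]
    constructor
    · split <;> [linarith [hX0 ω]; linarith]
    · split <;> [assumption; exact le_refl t]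
  have hmono : ∀ ω, t * (1 - Real.exp (-(X ω / t))) ≤ if X ω ≤ t then X ω else t := by
    intro ω
    have hexp := Real.add_one_le_exp (-(X ω / t))
    have h2 : 0 < Real.exp (-(X ω / t)) := Real.exp_pos _
    split
    · rename_i h
      have : 1 - Real.exp (-(X ω / t)) ≤ X ω / t := by linarith
      calc t * (1 - Real.exp (-(X ω / t))) ≤ t * (X ω / t) :=
            mul_le_mul_of_nonneg_left this ht.le
        _ = X ω := by field_simp
    · nlinarith
  calc (∫ ω, t * (1 - Real.exp (-(X ω / t))) ∂P)
      ≤ ∫ ω, (if X ω ≤ t then X ω else t) ∂P := integral_mono hgint hhint hmono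
    _ = HStar P X t + t * (P {ω | t < X ω}).toReal := by
        have hsplit : ∀ ω, (if X ω ≤ t then X ω else t)
            = (if X ω ≤ t then X ω else 0) + Set.indicator {ω | t < X ω} (fun _ => t) ω := by
          intro ω
          rw [Set.indicator_apply]
          by_cases h : X ω ≤ t
          · simp [h, Set.mem_setOf_eq, not_lt.2 h]
          · simp [h, Set.mem_setOf_eq, not_le.1 h]
        rw [integral_congr_ae (ae_of_all _ hsplit)]
        have hint1 : Integrable (fun ω => if X ω ≤ t then X ω else 0) P := by
          apply (integrable_const t).mono'
            (Measurable.ite (measurableSet_le hXm measurable_const) hXm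
              measurable_const).aestronglyMeasurable
          refine ae_of_all _ fun ω => ?_
          rw [Real.norm_eq_abs, abs_le]
          constructor
          · split <;> [linarith [hX0 ω]; linarith]
          · split <;> [assumption; exact ht.le]
        have hint2 : Integrable (Set.indicator {ω | t < X ω} (fun _ => t)) P :=
          (integrable_const t).indicator (hXm measurableSet_Ioi)
        rw [integral_add hint1 hint2, HStar,
          integral_indicator_const (t : ℝ)
            (show MeasurableSet {ω | t < X ω} from hXm measurableSet_Ioi)]
        simp [smul_eq_mul, mul_comm, measureReal_def]

lemma psi_lower (P : Measure Ω) [IsProbabilityMeasure P] (X : Ω → ℝ)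
    (hXm : Measurable X) (hX0 : ∀ ω, 0 ≤ X ω) {a t : ℝ} (ha : 0 < a) (ht : 0 < t) :
    Real.exp (-a) * HStar P X (a * t) ≤ psiStar P X (1 / t) := by
  rw [psi_integral P X hXm hX0 ht]
  have hgm : Measurable fun ω => t * (1 - Real.exp (-(X ω / t))) :=
    (measurable_const.mul ((measurable_const.sub
      (Real.measurable_exp.comp (hXm.div_const t).neg))))
  have hgb : ∀ ω, ‖t * (1 - Real.exp (-(X ω / t)))‖ ≤ t := by
    intro ω
    have h1 : Real.exp (-(X ω / t)) ≤ 1 := by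
      rw [Real.exp_le_one_iff]
      have := hX0 ω
      have : 0 ≤ X ω / t := by positivity
      linarith
    have h2 : 0 < Real.exp (-(X ω / t)) := Real.exp_pos _
    rw [Real.norm_eq_abs, abs_of_nonneg (by nlinarith)]
    nlinarith
  have hgint : Integrable (fun ω => t * (1 - Real.exp (-(X ω / t)))) P :=
    (integrable_const t).mono' hgm.aestronglyMeasurable (ae_of_all _ hgb)
  have hint1 : Integrable (fun ω => if X ω ≤ a * t then X ω else 0) P := by
    apply (integrable_const (a * t)).mono'
      (Measurable.ite (measurableSet_le hXm measurable_const) hXm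
        measurable_const).aestronglyMeasurable
    refine ae_of_all _ fun ω => ?_
    rw [Real.norm_eq_abs, abs_le]
    constructor
    · split <;> [linarith [hX0 ω]; nlinarith]
    · split <;> [assumption; nlinarith]
  have hmono : ∀ ω, Real.exp (-a) * (if X ω ≤ a * t then X ω else 0)
      ≤ t * (1 - Real.exp (-(X ω / t))) := by
    intro ω
    have h2 : 0 < Real.exp (-(X ω / t)) := Real.exp_pos _
    have h1 : Real.exp (-(X ω / t)) ≤ 1 := by
      rw [Real.exp_le_one_iff]
      have := hX0 ω
      have : 0 ≤ X ω / t := by positivity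
      linarith
    split
    · rename_i h
      set u := X ω / t with hu
      have hu0 : 0 ≤ u := by have := hX0 ω; positivity
      have hua : u ≤ a := by
        rw [hu, div_le_iff₀ ht]
        linarith [h]
      -- key : u * exp(-u) ≤ 1 - exp(-u)
      have hkey : u * Real.exp (-u) ≤ 1 - Real.exp (-u) := by
        have h3 : (1 + u) * Real.exp (-u) ≤ Real.exp u * Real.exp (-u) :=
          mul_le_mul_of_nonneg_right (by linarith [Real.add_one_le_exp u])
            (Real.exp_pos _).le
        rw [← Real.exp_add] at h3
        simp at h3
        nlinarith
      have hmon : Real.exp (-a) ≤ Real.exp (-u) := Real.exp_le_exp.2 (by linarith)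
      have : Real.exp (-a) * X ω ≤ t * (1 - Real.exp (-u)) := by
        have hXω : X ω = t * u := by rw [hu]; field_simp
        rw [hXω]
        calc Real.exp (-a) * (t * u) ≤ Real.exp (-u) * (t * u) := by
              apply mul_le_mul_of_nonneg_right hmon (by positivity)
          _ = t * (u * Real.exp (-u)) := by ring
          _ ≤ t * (1 - Real.exp (-u)) := mul_le_mul_of_nonneg_left hkey ht.le
      exact this
    · simp only [mul_zero]
      nlinarith
  calc Real.exp (-a) * HStar P X (a * t)
      = ∫ ω, Real.exp (-a) * (if X ω ≤ a * t then X ω else 0) ∂P := by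
        rw [HStar, ← integral_const_mul]
    _ ≤ ∫ ω, t * (1 - Real.exp (-(X ω / t))) ∂P :=
        integral_mono (hint1.const_mul _) hgint hmono

/-- if `t·P{X > t} → b > 0`, then
`ψ*(1/t) ~ G*(t) ~ H*(t) ~ b log t` as `t → ∞`. -/
theorem tail_laplace_log_asymptotics (P : Measure Ω) [IsProbabilityMeasure P]
    (X : Ω → ℝ) (hXm : Measurable X) (hX0 : ∀ ω, 0 ≤ X ω) (b : ℝ) (hb : 0 < b)
    (htail : Tendsto (fun t : ℝ => t * (P {ω | t < X ω}).toReal) atTop (nhds b)) :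
    Tendsto (fun t : ℝ => psiStar P X (1 / t) / (b * Real.log t)) atTop (nhds 1) ∧
    Tendsto (fun t : ℝ => GStar P X t / (b * Real.log t)) atTop (nhds 1) ∧
    Tendsto (fun t : ℝ => HStar P X t / (b * Real.log t)) atTop (nhds 1) := by
  have hG : Tendsto (fun t => GStar P X t / Real.log t) atTop (nhds b) :=
    G_asymp P X b hb htail
  have hGratio : Tendsto (fun t : ℝ => GStar P X t / (b * Real.log t)) atTop (nhds 1) := by
    have h := hG.div_const b
    rw [div_self hb.ne'] at h
    apply h.congr
    intro t; ring
  have htF0 : Tendsto (fun t : ℝ => t * (P {ω | t < X ω}).toReal / Real.log t)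
      atTop (nhds 0) := by
    have h := htail.mul Real.tendsto_log_atTop.inv_tendsto_atTop
    rw [mul_zero] at h
    apply h.congr
    intro t; simp [div_eq_mul_inv, Pi.inv_apply]
  have hHlog : Tendsto (fun t : ℝ => HStar P X t / Real.log t) atTop (nhds b) := by
    have h := hG.sub htF0
    rw [sub_zero] at h
    apply h.congr'
    filter_upwards [eventually_gt_atTop 0] with t ht
    rw [H_eq_G P X hXm hX0 ht, sub_div]
  have hHratio : Tendsto (fun t : ℝ => HStar P X t / (b * Real.log t)) atTop (nhds 1) := by
    have h := hHlog.div_const b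
    rw [div_self hb.ne'] at h
    apply h.congr
    intro t; ring
  refine ⟨?_, hGratio, hHratio⟩
  rw [Metric.tendsto_nhds]
  intro ε hε
  set a : ℝ := min (ε / 2) 1 with ha
  have hapos : 0 < a := lt_min (half_pos hε) one_pos
  have hea : 1 - ε / 2 ≤ Real.exp (-a) := by
    have h1 : 1 - a ≤ Real.exp (-a) := by linarith [Real.add_one_le_exp (-a)]
    have h2 : a ≤ ε / 2 := min_le_left _ _
    linarith
  have hcomp : Tendsto (fun t : ℝ => a * t) atTop atTop :=
    Tendsto.const_mul_atTop hapos tendsto_id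
  have hHa : Tendsto (fun t : ℝ => HStar P X (a * t) / (b * Real.log t)) atTop (nhds 1) := by
    have h1 : Tendsto (fun t : ℝ => HStar P X (a * t) / Real.log (a * t)) atTop (nhds b) :=
      hHlog.comp hcomp
    have h2 : Tendsto (fun t : ℝ => Real.log (a * t) / (b * Real.log t)) atTop
        (nhds (1 / b)) := by
      have h3 : Tendsto (fun t : ℝ => (Real.log a * (Real.log t)⁻¹ + 1) / b) atTop
          (nhds ((Real.log a * 0 + 1) / b)) :=
        ((tendsto_const_nhds.mul Real.tendsto_log_atTop.inv_tendsto_atTop).add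
          tendsto_const_nhds).div_const b
      rw [mul_zero, zero_add] at h3
      apply h3.congr'
      filter_upwards [eventually_gt_atTop 1] with t ht
      have hlogpos : 0 < Real.log t := Real.log_pos ht
      rw [Real.log_mul hapos.ne' (by linarith : t ≠ 0)]
      rw [div_eq_div_iff hb.ne' (by positivity : b * Real.log t ≠ 0)]
      field_simp
    have h4 := h1.mul h2
    rw [show b * (1 / b) = 1 by field_simp] at h4
    apply h4.congr'
    filter_upwards [eventually_gt_atTop 1, hcomp.eventually_gt_atTop 1] with t ht hat
    have h5 : Real.log t ≠ 0 := (Real.log_pos ht).ne'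
    have h6 : Real.log (a * t) ≠ 0 := (Real.log_pos hat).ne'
    field_simp
  have hlowlim : Tendsto
      (fun t : ℝ => Real.exp (-a) * (HStar P X (a * t) / (b * Real.log t)))
      atTop (nhds (Real.exp (-a))) := by
    have := hHa.const_mul (Real.exp (-a))
    rwa [mul_one] at this
  have huplim : Tendsto
      (fun t : ℝ => (HStar P X t + t * (P {ω | t < X ω}).toReal) / (b * Real.log t))
      atTop (nhds 1) := by
    have h0 : Tendsto (fun t : ℝ => t * (P {ω | t < X ω}).toReal / (b * Real.log t))
        atTop (nhds 0) := by
      have h := htF0.div_const b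
      rw [zero_div] at h
      apply h.congr
      intro t; ring
    have h := hHratio.add h0
    rw [add_zero] at h
    apply h.congr
    intro t; rw [← add_div]
  have hev1 : ∀ᶠ t in atTop,
      1 - ε < Real.exp (-a) * (HStar P X (a * t) / (b * Real.log t)) :=
    hlowlim.eventually_const_lt (by linarith)
  have hev2 : ∀ᶠ t in atTop,
      (HStar P X t + t * (P {ω | t < X ω}).toReal) / (b * Real.log t) < 1 + ε :=
    huplim.eventually_lt_const (by linarith)
  filter_upwards [hev1, hev2, eventually_gt_atTop 1] with t h1' h2' ht
  have htpos : 0 < t := by linarith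
  have hlogpos : 0 < Real.log t := Real.log_pos ht
  have hbL : (0:ℝ) < b * Real.log t := mul_pos hb hlogpos
  have hup := psi_upper P X hXm hX0 htpos
  have hlo := psi_lower P X hXm hX0 hapos htpos
  have hA : psiStar P X (1 / t) / (b * Real.log t)
      ≤ (HStar P X t + t * (P {ω | t < X ω}).toReal) / (b * Real.log t) :=
    div_le_div_of_nonneg_right hup hbL.le
  have hB : Real.exp (-a) * HStar P X (a * t) / (b * Real.log t)
      ≤ psiStar P X (1 / t) / (b * Real.log t) :=
    div_le_div_of_nonneg_right hlo hbL.le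
  rw [mul_div_assoc] at hB
  rw [Real.dist_eq, abs_lt]
  constructor
  · linarith
  · linarith

end
end

section
/- Let t : [0,∞) → [0,∞). Assume that σ̲_t(h₀) < ∞ for some h₀ > 0 and that, for some a ≥ 0, the function x ↦ e^{−ax} t(x) is nonincreasing on [0,∞). Then t is directly Riemann integrable on ℝ⁺. -/
open Filter ENNReal

noncomputable section

/-- Upper Riemann sum `σ̄_t(h)` over `[0,∞)`, valued in `ℝ≥0∞`. -/
def upperSum (t : ℝ → ℝ) (h : ℝ) : ℝ≥0∞ :=
  ENNReal.ofReal h *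
    ∑' n : ℕ, ⨆ y ∈ Set.Ico ((n : ℝ) * h) (((n : ℝ) + 1) * h), ENNReal.ofReal (t y)

/-- Lower Riemann sum `σ̲_t(h)` over `[0,∞)`, valued in `ℝ≥0∞`. -/
def lowerSum (t : ℝ → ℝ) (h : ℝ) : ℝ≥0∞ :=
  ENNReal.ofReal h *
    ∑' n : ℕ, ⨅ y ∈ Set.Ico ((n : ℝ) * h) (((n : ℝ) + 1) * h), ENNReal.ofReal (t y)

/-- Direct Riemann integrability on `ℝ⁺`. -/
def DRI (t : ℝ → ℝ) : Prop :=
  (∀ h > 0, upperSum t h ≠ ⊤) ∧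
    Tendsto (fun h => upperSum t h - lowerSum t h) (nhdsWithin 0 (Set.Ioi 0)) (nhds 0)

section Aux

open Set MeasureTheory

/-- abbreviation for the sup over the `n`-th cell -/
def cellSup (t : ℝ → ℝ) (h : ℝ) (n : ℕ) : ℝ≥0∞ :=
  ⨆ y ∈ Set.Ico ((n : ℝ) * h) (((n : ℝ) + 1) * h), ENNReal.ofReal (t y)

def cellInf (t : ℝ → ℝ) (h : ℝ) (n : ℕ) : ℝ≥0∞ :=
  ⨅ y ∈ Set.Ico ((n : ℝ) * h) (((n : ℝ) + 1) * h), ENNReal.ofReal (t y)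

lemma upperSum_eq (t : ℝ → ℝ) (h : ℝ) :
    upperSum t h = ENNReal.ofReal h * ∑' n : ℕ, cellSup t h n := rfl

lemma lowerSum_eq (t : ℝ → ℝ) (h : ℝ) :
    lowerSum t h = ENNReal.ofReal h * ∑' n : ℕ, cellInf t h n := rfl

lemma iUnion_cells {h : ℝ} (hh : 0 < h) :
    (⋃ n : ℕ, Set.Ico ((n : ℝ) * h) (((n : ℝ) + 1) * h)) = Set.Ici (0 : ℝ) := by
  ext y
  simp only [Set.mem_iUnion, Set.mem_Ico, Set.mem_Ici]
  constructor
  · rintro ⟨n, h1, _⟩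
    exact le_trans (mul_nonneg (Nat.cast_nonneg n) hh.le) h1
  · intro hy
    refine ⟨⌊y / h⌋₊, ?_, ?_⟩
    · calc (⌊y / h⌋₊ : ℝ) * h ≤ (y / h) * h :=
            mul_le_mul_of_nonneg_right (Nat.floor_le (div_nonneg hy hh.le)) hh.le
        _ = y := div_mul_cancel₀ y hh.ne'
    · have hlt : y / h < (⌊y / h⌋₊ : ℝ) + 1 := Nat.lt_floor_add_one _
      calc y = (y / h) * h := (div_mul_cancel₀ y hh.ne').symm
        _ < ((⌊y / h⌋₊ : ℝ) + 1) * h := mul_lt_mul_of_pos_right hlt hh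

lemma pairwise_disjoint_cells {h : ℝ} (hh : 0 < h) :
    Pairwise (Function.onFun Disjoint fun n : ℕ => Set.Ico ((n : ℝ) * h) (((n : ℝ) + 1) * h)) := by
  intro i j hij
  wlog hlt : i < j generalizing i j
  · exact (this hij.symm (by omega)).symm
  have hc : ((i : ℝ) + 1) ≤ (j : ℝ) := by exact_mod_cast Nat.succ_le_of_lt hlt
  simp only [Function.onFun]
  rw [Set.disjoint_left]
  intro y hy1 hy2
  have h1 : y < ((i : ℝ) + 1) * h := hy1.2
  have h2 : (j : ℝ) * h ≤ y := hy2.1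
  have : ((i : ℝ) + 1) * h ≤ (j : ℝ) * h := mul_le_mul_of_nonneg_right hc hh.le
  linarith

end Aux

/-- if `σ̲_t(h₀) < ∞` for some `h₀ > 0` and `x ↦ e^{-ax} t(x)` is
nonincreasing on `[0,∞)` for some `a ≥ 0`, then `t` is directly Riemann integrable
on `ℝ⁺`. -/
theorem dri_of_lowerSum_finite (t : ℝ → ℝ) (ht0 : ∀ x, 0 ≤ x → 0 ≤ t x)
    (h₀ : ℝ) (hh₀ : 0 < h₀) (hlow : lowerSum t h₀ ≠ ⊤)
    (a : ℝ) (ha : 0 ≤ a)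
    (hmono : AntitoneOn (fun x => Real.exp (-(a * x)) * t x) (Set.Ici 0)) :
    DRI t := by
  classical
  open MeasureTheory in
  set g : ℝ → ℝ := fun x => Real.exp (-(a * x)) * t x with hgdef
  have htg : ∀ y : ℝ, t y = Real.exp (a * y) * g y := by
    intro y
    simp only [hgdef]
    rw [← mul_assoc, ← Real.exp_add]
    simp
  have hgnn : ∀ y : ℝ, 0 ≤ y → 0 ≤ g y := fun y hy =>
    mul_nonneg (Real.exp_nonneg _) (ht0 y hy)
  -- sup bound on each cell
  have supb : ∀ h : ℝ, 0 < h → ∀ n : ℕ,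
      cellSup t h n ≤ ENNReal.ofReal (Real.exp (a * (((n : ℝ) + 1) * h)) * g ((n : ℝ) * h)) := by
    intro h hh n
    apply iSup₂_le
    intro y hy
    have hnh : (0 : ℝ) ≤ (n : ℝ) * h := mul_nonneg (Nat.cast_nonneg n) hh.le
    have hy0 : (0 : ℝ) ≤ y := hnh.trans hy.1
    apply ENNReal.ofReal_le_ofReal
    rw [htg y]
    have h1 : Real.exp (a * y) ≤ Real.exp (a * (((n : ℝ) + 1) * h)) :=
      Real.exp_le_exp.mpr (mul_le_mul_of_nonneg_left hy.2.le ha)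
    have h2 : g y ≤ g ((n : ℝ) * h) := hmono (Set.mem_Ici.mpr hnh) (Set.mem_Ici.mpr hy0) hy.1
    exact mul_le_mul h1 h2 (hgnn y hy0) (Real.exp_nonneg _)
  -- inf bound on each cell
  have infb : ∀ h : ℝ, 0 < h → ∀ n : ℕ,
      ENNReal.ofReal (Real.exp (a * ((n : ℝ) * h)) * g (((n : ℝ) + 1) * h)) ≤ cellInf t h n := by
    intro h hh n
    apply le_iInf₂
    intro y hy
    have hnh : (0 : ℝ) ≤ (n : ℝ) * h := mul_nonneg (Nat.cast_nonneg n) hh.le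
    have hy0 : (0 : ℝ) ≤ y := hnh.trans hy.1
    have hn1 : (0 : ℝ) ≤ ((n : ℝ) + 1) * h :=
      mul_nonneg (by positivity) hh.le
    apply ENNReal.ofReal_le_ofReal
    rw [htg y]
    have h1 : Real.exp (a * ((n : ℝ) * h)) ≤ Real.exp (a * y) :=
      Real.exp_le_exp.mpr (mul_le_mul_of_nonneg_left hy.1 ha)
    have h2 : g (((n : ℝ) + 1) * h) ≤ g y :=
      hmono (Set.mem_Ici.mpr hy0) (Set.mem_Ici.mpr hn1) hy.2.le
    exact mul_le_mul h1 h2 (hgnn _ hn1) (Real.exp_nonneg _)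
  -- linking sup of cell (n+1) with inf of cell n
  have link : ∀ h : ℝ, 0 < h → ∀ n : ℕ,
      cellSup t h (n + 1) ≤ ENNReal.ofReal (Real.exp (2 * (a * h))) * cellInf t h n := by
    intro h hh n
    refine le_trans (supb h hh (n + 1)) ?_
    have hcast : ((n + 1 : ℕ) : ℝ) = (n : ℝ) + 1 := by push_cast; ring
    rw [hcast]
    have e1 : Real.exp (a * ((((n : ℝ) + 1) + 1) * h))
        = Real.exp (2 * (a * h)) * Real.exp (a * ((n : ℝ) * h)) := by
      rw [← Real.exp_add]; congr 1; ring
    rw [e1, mul_assoc, ENNReal.ofReal_mul (Real.exp_nonneg _)]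
    exact mul_le_mul_right (infb h hh n) _
  have cell0 : ∀ h : ℝ, 0 < h →
      cellSup t h 0 ≤ ENNReal.ofReal (Real.exp (a * h) * t 0) := by
    intro h hh
    refine le_trans (supb h hh 0) ?_
    have hg0 : g 0 = t 0 := by simp [hgdef]
    simp only [Nat.cast_zero, zero_add, zero_mul, one_mul, hg0]
    exact le_refl _
  -- the key comparison between upper and lower sums
  have keyUpper : ∀ h : ℝ, 0 < h →
      upperSum t h ≤ ENNReal.ofReal (h * (Real.exp (a * h) * t 0))
        + ENNReal.ofReal (Real.exp (2 * (a * h))) * lowerSum t h := by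
    intro h hh
    rw [upperSum_eq, lowerSum_eq]
    have hsplit : ∑' n : ℕ, cellSup t h n
        = cellSup t h 0 + ∑' n : ℕ, cellSup t h (n + 1) :=
      tsum_eq_zero_add' ENNReal.summable
    have hsum : ∑' n : ℕ, cellSup t h n
        ≤ ENNReal.ofReal (Real.exp (a * h) * t 0)
          + ENNReal.ofReal (Real.exp (2 * (a * h))) * ∑' n : ℕ, cellInf t h n := by
      rw [hsplit, ← ENNReal.tsum_mul_left]
      exact add_le_add (cell0 h hh) (ENNReal.tsum_le_tsum (link h hh))
    calc ENNReal.ofReal h * ∑' n : ℕ, cellSup t h n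
        ≤ ENNReal.ofReal h * (ENNReal.ofReal (Real.exp (a * h) * t 0)
          + ENNReal.ofReal (Real.exp (2 * (a * h))) * ∑' n : ℕ, cellInf t h n) :=
          mul_le_mul_right hsum _
      _ = ENNReal.ofReal (h * (Real.exp (a * h) * t 0))
          + ENNReal.ofReal (Real.exp (2 * (a * h)))
            * (ENNReal.ofReal h * ∑' n : ℕ, cellInf t h n) := by
          rw [mul_add, ENNReal.ofReal_mul hh.le]
          ring
  -- the integral
  set I : ℝ≥0∞ := ∫⁻ y in Set.Ici (0 : ℝ), ENNReal.ofReal (t y) with hIdef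
  have hIeq : ∀ h : ℝ, 0 < h →
      I = ∑' n : ℕ, ∫⁻ y in Set.Ico ((n : ℝ) * h) (((n : ℝ) + 1) * h), ENNReal.ofReal (t y) := by
    intro h hh
    rw [hIdef, ← iUnion_cells hh,
      MeasureTheory.lintegral_iUnion (fun n => measurableSet_Ico) (pairwise_disjoint_cells hh)]
  have hvol : ∀ h : ℝ, 0 < h → ∀ n : ℕ,
      MeasureTheory.volume (Set.Ico ((n : ℝ) * h) (((n : ℝ) + 1) * h)) = ENNReal.ofReal h := by
    intro h hh n
    rw [Real.volume_Ico]
    congr 1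
    ring
  have keyIUp : ∀ h : ℝ, 0 < h → I ≤ upperSum t h := by
    intro h hh
    rw [hIeq h hh, upperSum_eq, ← ENNReal.tsum_mul_left]
    refine ENNReal.tsum_le_tsum fun n => ?_
    have hb : ∀ y ∈ Set.Ico ((n : ℝ) * h) (((n : ℝ) + 1) * h),
        ENNReal.ofReal (t y) ≤ cellSup t h n := fun y hy =>
      le_iSup₂ (f := fun (y : ℝ) (_ : y ∈ Set.Ico ((n : ℝ) * h) (((n : ℝ) + 1) * h)) =>
        ENNReal.ofReal (t y)) y hy
    calc ∫⁻ y in Set.Ico ((n : ℝ) * h) (((n : ℝ) + 1) * h), ENNReal.ofReal (t y)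
        ≤ ∫⁻ _ in Set.Ico ((n : ℝ) * h) (((n : ℝ) + 1) * h), cellSup t h n :=
          MeasureTheory.setLIntegral_mono' measurableSet_Ico hb
      _ = cellSup t h n * ENNReal.ofReal h := by
          rw [MeasureTheory.setLIntegral_const, hvol h hh n]
      _ = ENNReal.ofReal h * cellSup t h n := mul_comm _ _
  have keyLowI : ∀ h : ℝ, 0 < h → lowerSum t h ≤ I := by
    intro h hh
    rw [hIeq h hh, lowerSum_eq, ← ENNReal.tsum_mul_left]
    refine ENNReal.tsum_le_tsum fun n => ?_
    have hb : ∀ᵐ y ∂(MeasureTheory.volume.restrict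
        (Set.Ico ((n : ℝ) * h) (((n : ℝ) + 1) * h))),
        cellInf t h n ≤ ENNReal.ofReal (t y) := by
      refine (MeasureTheory.ae_restrict_iff' measurableSet_Ico).mpr
        (MeasureTheory.ae_of_all _ fun y hy => ?_)
      exact iInf₂_le y hy
    calc ENNReal.ofReal h * cellInf t h n
        = cellInf t h n * ENNReal.ofReal h := mul_comm _ _
      _ = ∫⁻ _ in Set.Ico ((n : ℝ) * h) (((n : ℝ) + 1) * h), cellInf t h n := by
          rw [MeasureTheory.setLIntegral_const, hvol h hh n]
      _ ≤ ∫⁻ y in Set.Ico ((n : ℝ) * h) (((n : ℝ) + 1) * h), ENNReal.ofReal (t y) :=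
          MeasureTheory.lintegral_mono_ae hb
  -- finiteness of I
  have hItop : I ≠ ⊤ := by
    refine ne_top_of_le_ne_top ?_ ((keyIUp h₀ hh₀).trans (keyUpper h₀ hh₀))
    exact ENNReal.add_ne_top.mpr ⟨ENNReal.ofReal_ne_top,
      ENNReal.mul_ne_top ENNReal.ofReal_ne_top hlow⟩
  constructor
  · intro h hh
    refine ne_top_of_le_ne_top ?_ ((keyUpper h hh).trans
      (add_le_add_right (mul_le_mul_right (keyLowI h hh) _) _))
    exact ENNReal.add_ne_top.mpr ⟨ENNReal.ofReal_ne_top,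
      ENNReal.mul_ne_top ENNReal.ofReal_ne_top hItop⟩
  · -- squeeze
    have bound : ∀ h : ℝ, 0 < h → upperSum t h - lowerSum t h
        ≤ ENNReal.ofReal (h * (Real.exp (a * h) * t 0))
          + ENNReal.ofReal (Real.exp (2 * (a * h)) - 1) * I := by
      intro h hh
      rw [tsub_le_iff_right]
      have hexp1 : (1 : ℝ) ≤ Real.exp (2 * (a * h)) :=
        Real.one_le_exp (by positivity)
      have hofr : ENNReal.ofReal (Real.exp (2 * (a * h)))
          = ENNReal.ofReal (Real.exp (2 * (a * h)) - 1) + 1 := by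
        rw [← ENNReal.ofReal_one, ← ENNReal.ofReal_add (by linarith) zero_le_one]
        norm_num
      calc upperSum t h
          ≤ ENNReal.ofReal (h * (Real.exp (a * h) * t 0))
            + ENNReal.ofReal (Real.exp (2 * (a * h))) * lowerSum t h := keyUpper h hh
        _ = ENNReal.ofReal (h * (Real.exp (a * h) * t 0))
            + (ENNReal.ofReal (Real.exp (2 * (a * h)) - 1) * lowerSum t h + lowerSum t h) := by
            rw [hofr, add_mul, one_mul]
        _ ≤ ENNReal.ofReal (h * (Real.exp (a * h) * t 0))
            + (ENNReal.ofReal (Real.exp (2 * (a * h)) - 1) * I + lowerSum t h) :=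
            add_le_add_right (add_le_add_left
              (mul_le_mul_right (keyLowI h hh) _) _) _
        _ = ENNReal.ofReal (h * (Real.exp (a * h) * t 0))
            + ENNReal.ofReal (Real.exp (2 * (a * h)) - 1) * I + lowerSum t h := by
            rw [add_assoc]
    have t1 : Tendsto (fun h : ℝ => ENNReal.ofReal (h * (Real.exp (a * h) * t 0)))
        (nhdsWithin 0 (Set.Ioi 0)) (nhds 0) := by
      have hc : Tendsto (fun h : ℝ => h * (Real.exp (a * h) * t 0)) (nhds 0) (nhds 0) := by
        have : Continuous fun h : ℝ => h * (Real.exp (a * h) * t 0) := by fun_prop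
        simpa using this.tendsto 0
      have := (ENNReal.continuous_ofReal.tendsto 0).comp hc
      simpa [Function.comp_def] using this.mono_left nhdsWithin_le_nhds
    have t2 : Tendsto (fun h : ℝ => ENNReal.ofReal (Real.exp (2 * (a * h)) - 1) * I)
        (nhdsWithin 0 (Set.Ioi 0)) (nhds 0) := by
      have hc : Tendsto (fun h : ℝ => Real.exp (2 * (a * h)) - 1) (nhds 0) (nhds 0) := by
        have : Continuous fun h : ℝ => Real.exp (2 * (a * h)) - 1 := by fun_prop
        have h0 : Real.exp (2 * (a * (0:ℝ))) - 1 = 0 := by simp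
        simpa [h0] using this.tendsto 0
      have := ((ENNReal.continuous_ofReal.tendsto 0).comp hc).mono_left
        (nhdsWithin_le_nhds (s := Set.Ioi (0:ℝ)))
      have := ENNReal.Tendsto.mul_const this (Or.inr hItop)
      simpa using this
    have tB := t1.add t2
    rw [add_zero] at tB
    refine tendsto_of_tendsto_of_tendsto_of_le_of_le'
      (tendsto_const_nhds : Tendsto (fun _ : ℝ => (0 : ℝ≥0∞))
        (nhdsWithin 0 (Set.Ioi 0)) (nhds 0)) tB
      (Eventually.of_forall fun _ => zero_le) ?_
    exact eventually_mem_nhdsWithin.mono fun h hh => bound h hh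

end
end

section
/- Let t : [0,∞) → [0,∞) be measurable and assume that sup_{x ≥ 0} ∫_{[0,∞)} t(x+y) dV*(y) < ∞. Then ∫₀^∞ t(y) dy < ∞ (t is Lebesgue integrable on [0,∞)). -/
open MeasureTheory ProbabilityTheory Filter ENNReal NNReal

noncomputable section

variable {Ω : Type*} [MeasurableSpace Ω]

/-- The random walk `S*_n = η₁ + ⋯ + η_n` started at `0`. -/
def rwalk (η : ℕ → Ω → ℝ) (n : ℕ) (ω : Ω) : ℝ :=
  ∑ i ∈ Finset.range n, η i ω

/-- The renewal measure `V*(A) = Σ_n P{S*_n ∈ A}`, so that `∫ · dV*` is the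
Lebesgue–Stieltjes integral with respect to the renewal function `V*`. -/
def renewalMeasure (P : Measure Ω) (η : ℕ → Ω → ℝ) : Measure ℝ :=
  Measure.sum fun n : ℕ => P.map (rwalk η n)

/-- Standing assumptions for a standard renewal process: i.i.d. nonnegative jumps with
finite positive mean and nonarithmetic distribution. -/
structure RenewalSetup (P : Measure Ω) (η : ℕ → Ω → ℝ) : Prop where
  meas : ∀ i, Measurable (η i)
  indep : iIndepFun η P
  ident : ∀ i, P.map (η i) = P.map (η 0)
  nonneg : ∀ i, ∀ᵐ ω ∂P, 0 ≤ η i ω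
  int : Integrable (η 0) P
  mean_pos : 0 < ∫ ω, η 0 ω ∂P
  nonarith : ∀ d : ℝ, 0 < d → P {ω | ∃ k : ℤ, η 0 ω = d * k} ≠ 1

set_option maxHeartbeats 1000000

/-- if `t : ℝ⁺ → ℝ⁺` is measurable and
`sup_{x ≥ 0} ∫_{[0,∞)} t(x+y) dV*(y) < ∞`, then `∫₀^∞ t(y) dy < ∞`. -/
theorem lebesgue_integrable_of_renewal_integral_bounded
    {Ω : Type*} [MeasurableSpace Ω] (P : Measure Ω) [IsProbabilityMeasure P]
    (η : ℕ → Ω → ℝ) (hr : RenewalSetup P η)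
    (t : ℝ → ℝ) (htm : Measurable t) (ht0 : ∀ y, 0 ≤ y → 0 ≤ t y)
    (C : ℝ≥0∞) (hC : C ≠ ⊤)
    (hsup : ∀ x : ℝ, 0 ≤ x →
      ∫⁻ y in Set.Ici (0 : ℝ), ENNReal.ofReal (t (x + y)) ∂(renewalMeasure P η) ≤ C) :
    ∫⁻ y in Set.Ici (0 : ℝ), ENNReal.ofReal (t y) ≠ ⊤ := by
  classical
  have hηm := hr.meas
  set ν : Measure ℝ := P.map (η 0) with hν
  have hSm : ∀ n, Measurable (rwalk η n) := fun n =>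
    Finset.measurable_sum _ fun i _ => hηm i
  have hφ : Measurable fun s : ℝ => ENNReal.ofReal (t s) := htm.ennreal_ofReal
  haveI hνprob : IsProbabilityMeasure ν := Measure.isProbabilityMeasure_map (hηm 0).aemeasurable
  have hPn : ∀ n, IsProbabilityMeasure (P.map (rwalk η n)) := fun n =>
    Measure.isProbabilityMeasure_map (hSm n).aemeasurable
  have haeS : ∀ᵐ ω ∂P, ∀ n, 0 ≤ rwalk η n ω := by
    have hae : ∀ᵐ ω ∂P, ∀ i, 0 ≤ η i ω := ae_all_iff.mpr hr.nonneg
    exact hae.mono fun ω hω n => Finset.sum_nonneg fun i _ => hω i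
  set u : ℝ → ℝ≥0∞ := fun x => ∑' n, ∫⁻ ω, ENNReal.ofReal (t (x + rwalk η n ω)) ∂P with hu
  have humeas : Measurable u := by
    refine Measurable.ennreal_tsum fun n => ?_
    exact Measurable.lintegral_prod_right
      (hφ.comp (measurable_fst.add ((hSm n).comp measurable_snd)))
  -- `u x ≤ C` for `x ≥ 0`
  have hule : ∀ x : ℝ, 0 ≤ x → u x ≤ C := by
    intro x hx
    refine le_trans (le_of_eq ?_) (hsup x hx)
    have hm1 : Measurable fun a : ℝ => ENNReal.ofReal (t (x + a)) :=
      (htm.comp (measurable_const_add x)).ennreal_ofReal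
    rw [renewalMeasure, Measure.restrict_sum _ measurableSet_Ici, lintegral_sum_measure]
    simp only [hu]
    refine tsum_congr fun n => ?_
    rw [← lintegral_indicator measurableSet_Ici,
      lintegral_map (hm1.indicator measurableSet_Ici) (hSm n)]
    refine lintegral_congr_ae (haeS.mono fun ω hω => ?_)
    exact (Set.indicator_of_mem (hω n) (fun a => ENNReal.ofReal (t (x + a)))).symm
  -- renewal equation
  have hrec : ∀ x : ℝ, u x = ENNReal.ofReal (t x) + ∫⁻ e, u (x + e) ∂ν := by
    intro x
    have h0 : ∫⁻ ω, ENNReal.ofReal (t (x + rwalk η 0 ω)) ∂P = ENNReal.ofReal (t x) := by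
      simp [rwalk]
    have hsplit : u x
        = ENNReal.ofReal (t x) + ∑' n, ∫⁻ ω, ENNReal.ofReal (t (x + rwalk η (n + 1) ω)) ∂P := by
      simp only [hu]
      rw [← h0]
      exact tsum_eq_zero_add' ENNReal.summable
    rw [hsplit]
    congr 1
    have hterm : ∀ n, ∫⁻ ω, ENNReal.ofReal (t (x + rwalk η (n + 1) ω)) ∂P
        = ∫⁻ e, ∫⁻ s, ENNReal.ofReal (t (x + s + e)) ∂(P.map (rwalk η n)) ∂ν := by
      intro n
      haveI := hPn n
      have hind : IndepFun (rwalk η n) (η n) P := by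
        have hEq : rwalk η n = ∑ j ∈ Finset.range n, η j := by
          funext ω; simp [rwalk]
        rw [hEq]
        exact hr.indep.indepFun_sum_range_succ hηm n
      have hmap : P.map (fun ω => (rwalk η n ω, η n ω))
          = (P.map (rwalk η n)).prod (P.map (η n)) :=
        (indepFun_iff_map_prod_eq_prod_map_map (hSm n).aemeasurable (hηm n).aemeasurable).mp hind
      have hmeasp : Measurable fun p : ℝ × ℝ => ENNReal.ofReal (t (x + p.1 + p.2)) :=
        hφ.comp ((measurable_const.add measurable_fst).add measurable_snd)
      have h1 : ∫⁻ ω, ENNReal.ofReal (t (x + rwalk η (n + 1) ω)) ∂P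
          = ∫⁻ p : ℝ × ℝ, ENNReal.ofReal (t (x + p.1 + p.2))
              ∂((P.map (rwalk η n)).prod (P.map (η n))) := by
        rw [← hmap, lintegral_map hmeasp ((hSm n).prodMk (hηm n))]
        refine lintegral_congr fun ω => ?_
        simp [rwalk, Finset.sum_range_succ, add_assoc]
      rw [h1, hr.ident n, lintegral_prod_symm _ hmeasp.aemeasurable]
    have hgn : ∀ n : ℕ, Measurable fun e : ℝ =>
        ∫⁻ s, ENNReal.ofReal (t (x + s + e)) ∂(P.map (rwalk η n)) := by
      intro n
      haveI := hPn n
      exact Measurable.lintegral_prod_right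
        (f := fun e s => ENNReal.ofReal (t (x + s + e)))
        (hφ.comp ((measurable_const.add measurable_snd).add measurable_fst))
    rw [tsum_congr hterm, ← lintegral_tsum fun n => (hgn n).aemeasurable]
    refine lintegral_congr fun e => ?_
    refine tsum_congr fun n => ?_
    have hm2 : Measurable fun s : ℝ => ENNReal.ofReal (t (x + s + e)) :=
      hφ.comp ((measurable_const.add measurable_id).add measurable_const)
    rw [lintegral_map hm2 (hSm n)]
    refine lintegral_congr fun ω => ?_
    have : x + rwalk η n ω + e = x + e + rwalk η n ω := by ring
    rw [this]
  -- mean is finite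
  set M : ℝ≥0∞ := ∫⁻ e, ENNReal.ofReal e ∂ν with hM
  have hMne : M ≠ ⊤ := by
    rw [hM, hν, lintegral_map ENNReal.measurable_ofReal (hηm 0)]
    have hint := hr.int.hasFiniteIntegral
    refine ne_top_of_le_ne_top hint.ne ?_
    exact lintegral_mono fun ω => Real.ofReal_le_enorm _
  set K : ℝ≥0∞ := C * M with hK
  have hKne : K ≠ ⊤ := ENNReal.mul_ne_top hC hMne
  -- translation identity
  have htrans : ∀ e A : ℝ, (∫⁻ x in Set.Ico (0 : ℝ) A, u (x + e))
      = ∫⁻ x in Set.Ico e (A + e), u x := by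
    intro e A
    rw [← lintegral_indicator measurableSet_Ico, ← lintegral_indicator measurableSet_Ico,
      ← lintegral_add_right_eq_self (fun x => (Set.Ico e (A + e)).indicator u x) e]
    refine lintegral_congr fun x => ?_
    simp only [Set.indicator_apply, Set.mem_Ico]
    congr 1
    simp [le_add_iff_nonneg_left, add_lt_add_iff_right]
  -- main bound
  have hmain : ∀ A : ℝ, 0 ≤ A → (∫⁻ x in Set.Ico (0 : ℝ) A, ENNReal.ofReal (t x)) ≤ K := by
    intro A hA
    set I : ℝ≥0∞ := ∫⁻ x in Set.Ico (0 : ℝ) A, ENNReal.ofReal (t x) with hI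
    set U : ℝ≥0∞ := ∫⁻ x in Set.Ico (0 : ℝ) A, u x with hU
    have hUle : U ≤ C * ENNReal.ofReal A := by
      rw [hU]
      calc ∫⁻ x in Set.Ico (0 : ℝ) A, u x ≤ ∫⁻ _ in Set.Ico (0 : ℝ) A, C :=
            setLIntegral_mono' measurableSet_Ico fun x hx => hule x hx.1
        _ = C * volume (Set.Ico (0 : ℝ) A) := setLIntegral_const _ _
        _ ≤ C * ENNReal.ofReal A := by rw [Real.volume_Ico, sub_zero]
    have hUne : U ≠ ⊤ := ne_top_of_le_ne_top (ENNReal.mul_ne_top hC ofReal_ne_top) hUle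
    set g : ℝ → ℝ≥0∞ := fun e => ∫⁻ x in Set.Ico (0 : ℝ) A, u (x + e) with hg
    have hgmeas : Measurable g :=
      Measurable.lintegral_prod_right (humeas.comp (measurable_snd.add measurable_fst))
    set J : ℝ≥0∞ := ∫⁻ e, g e ∂ν with hJ
    have hsplitU : U = I + J := by
      rw [hU]
      calc ∫⁻ x in Set.Ico (0 : ℝ) A, u x
          = ∫⁻ x in Set.Ico (0 : ℝ) A,
              (ENNReal.ofReal (t x) + ∫⁻ e, u (x + e) ∂ν) := lintegral_congr fun x => hrec x
        _ = I + ∫⁻ x in Set.Ico (0 : ℝ) A, ∫⁻ e, u (x + e) ∂ν := lintegral_add_left hφ _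
        _ = I + J := by
            congr 1
            rw [hJ]
            exact lintegral_lintegral_swap
              ((humeas.comp (measurable_fst.add measurable_snd)).aemeasurable)
    have hkey : ∀ᵐ e ∂ν, U ≤ g e + C * ENNReal.ofReal e := by
      have hpos : ∀ᵐ e ∂ν, 0 ≤ e := by
        rw [hν]
        exact (ae_map_iff (hηm 0).aemeasurable measurableSet_Ici).mpr (hr.nonneg 0)
      refine hpos.mono fun e he => ?_
      set e' : ℝ := min e A with he'
      have hsplit : Set.Ico (0 : ℝ) A = Set.Ico 0 e' ∪ Set.Ico e' A :=
        (Set.Ico_union_Ico_eq_Ico (le_min he hA) (min_le_right e A)).symm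
      have hdisj : Disjoint (Set.Ico (0 : ℝ) e') (Set.Ico e' A) :=
        Set.Ico_disjoint_Ico_same
      have h1 : (∫⁻ x in Set.Ico (0 : ℝ) e', u x) ≤ C * ENNReal.ofReal e := by
        calc ∫⁻ x in Set.Ico (0 : ℝ) e', u x ≤ ∫⁻ _ in Set.Ico (0 : ℝ) e', C :=
              setLIntegral_mono' measurableSet_Ico fun x hx => hule x hx.1
          _ = C * volume (Set.Ico (0 : ℝ) e') := setLIntegral_const _ _
          _ ≤ C * ENNReal.ofReal e := by
              rw [Real.volume_Ico, sub_zero]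
              exact mul_le_mul_right (ENNReal.ofReal_le_ofReal (min_le_left e A)) C
      have h2 : (∫⁻ x in Set.Ico e' A, u x) ≤ g e := by
        simp only [hg]
        rw [htrans e A]
        refine lintegral_mono_set ?_
        intro x hx
        rcases hx with ⟨hx1, hx2⟩
        have heA : e ≤ A := by
          by_contra hcon
          push_neg at hcon
          have : e' = A := min_eq_right hcon.le
          rw [this] at hx1
          exact absurd hx2 (not_lt.mpr hx1)
        have : e' = e := min_eq_left heA
        exact ⟨this ▸ hx1, hx2.trans_le (le_add_of_nonneg_right he)⟩
      calc U = (∫⁻ x in Set.Ico (0 : ℝ) e', u x) + ∫⁻ x in Set.Ico e' A, u x := by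
            rw [hU, hsplit, lintegral_union measurableSet_Ico hdisj]
        _ ≤ C * ENNReal.ofReal e + g e := add_le_add h1 h2
        _ = g e + C * ENNReal.ofReal e := add_comm _ _
    have hUbound : U ≤ J + K := by
      calc U = ∫⁻ _, U ∂ν := by simp
        _ ≤ ∫⁻ e, (g e + C * ENNReal.ofReal e) ∂ν := lintegral_mono_ae hkey
        _ = J + C * M := by
            rw [lintegral_add_left hgmeas, lintegral_const_mul C ENNReal.measurable_ofReal,
              hJ, hM]
        _ = J + K := by rw [hK]
    have hJne : J ≠ ⊤ := by
      refine ne_top_of_le_ne_top hUne ?_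
      rw [hsplitU]
      exact le_add_self
    have : J + I ≤ J + K := by
      calc J + I = I + J := add_comm _ _
        _ = U := hsplitU.symm
        _ ≤ J + K := hUbound
    exact (ENNReal.add_le_add_iff_left hJne).mp this
  -- conclusion via monotone convergence
  have hfin : (∫⁻ y in Set.Ici (0 : ℝ), ENNReal.ofReal (t y)) ≤ K := by
    rw [← lintegral_indicator measurableSet_Ici]
    have hmono : Monotone fun n : ℕ => (Set.Ico (0 : ℝ) n).indicator
        fun y => ENNReal.ofReal (t y) := by
      intro m n hmn
      refine Set.indicator_le_indicator_of_subset ?_ (fun _ => zero_le)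
      exact Set.Ico_subset_Ico le_rfl (by exact_mod_cast hmn)
    have hsup' : ∀ y : ℝ, (⨆ n : ℕ, (Set.Ico (0 : ℝ) n).indicator
        (fun y => ENNReal.ofReal (t y)) y)
        = (Set.Ici (0 : ℝ)).indicator (fun y => ENNReal.ofReal (t y)) y := by
      intro y
      by_cases hy : 0 ≤ y
      · rw [Set.indicator_of_mem (Set.mem_Ici.mpr hy)]
        refine le_antisymm (iSup_le fun n => ?_) ?_
        · exact Set.indicator_le_self _ _ y
        · obtain ⟨n, hn⟩ := exists_nat_gt y
          refine le_trans (le_of_eq ?_) (le_iSup _ n)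
          rw [Set.indicator_of_mem (Set.mem_Ico.mpr ⟨hy, hn⟩)]
      · push_neg at hy
        rw [Set.indicator_of_notMem (by simpa using hy.not_ge)]
        refine le_antisymm (iSup_le fun n => ?_) zero_le
        rw [Set.indicator_of_notMem (by simp [hy.not_ge])]
    calc ∫⁻ y, (Set.Ici (0 : ℝ)).indicator (fun y => ENNReal.ofReal (t y)) y
        = ∫⁻ y, ⨆ n : ℕ, (Set.Ico (0 : ℝ) n).indicator (fun y => ENNReal.ofReal (t y)) y := by
          refine lintegral_congr fun y => (hsup' y).symm
      _ = ⨆ n : ℕ, ∫⁻ y, (Set.Ico (0 : ℝ) n).indicator (fun y => ENNReal.ofReal (t y)) y :=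
          lintegral_iSup (fun n => hφ.indicator measurableSet_Ico) hmono
      _ ≤ K := by
          refine iSup_le fun n => ?_
          rw [lintegral_indicator measurableSet_Ico]
          exact hmain n (Nat.cast_nonneg n)
  exact ne_top_of_le_ne_top hKne hfin

end
end

section
/- There exist a continuous function t : [0,∞) → [0,∞) and a standard random walk (S_n*)_{n≥0} with S₀* = 0 and i.i.d. nonnegative jumps of finite positive mean having a nonarithmetic distribution, with renewal function V*(x) := Σ_{n≥0} P{S_n* ≤ x}, such that ∫_{[0,∞)} t(y) dV*(y) < ∞ and yet ∫₀^∞ t(y) dy = ∞. -/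
open MeasureTheory ProbabilityTheory Filter ENNReal NNReal

noncomputable section

variable {Ω : Type*} [MeasurableSpace Ω]

namespace Cex

abbrev G := ℕ → ZMod 2

instance mG : MeasurableSpace G := borel G
instance : BorelSpace G := ⟨rfl⟩

def KK : TopologicalSpace.PositiveCompacts G := ⟨⟨Set.univ, isCompact_univ⟩, by simp⟩

def P : Measure G := Measure.addHaarMeasure KK

instance : P.IsAddLeftInvariant := by unfold P; infer_instance

instance Pprob : IsProbabilityMeasure P :=
  ⟨by simpa [P, KK] using Measure.addHaarMeasure_self (K₀ := KK)⟩

def cyl (S : Finset ℕ) (b : ℕ → ZMod 2) : Set G := {ω | ∀ i ∈ S, ω i = b i}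

lemma meas_coord (i : ℕ) : Measurable (fun ω : G => ω i) := (continuous_apply i).measurable

lemma cyl_meas (S : Finset ℕ) (b : ℕ → ZMod 2) : MeasurableSet (cyl S b) := by
  have : cyl S b = ⋂ i ∈ S, (fun ω : G => ω i) ⁻¹' {b i} := by ext ω; simp [cyl]
  rw [this]
  exact MeasurableSet.biInter S.countable_toSet fun i _ =>
    (meas_coord i) (MeasurableSet.of_discrete)

lemma cyl_translate (S : Finset ℕ) (b b' : ℕ → ZMod 2) : P (cyl S b) = P (cyl S b') := by
  classical
  set c : G := fun i => if i ∈ S then b i - b' i else 0 with hc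
  have h : cyl S b' = (fun ω => c + ω) ⁻¹' (cyl S b) := by
    ext ω
    simp only [cyl, Set.mem_preimage, Set.mem_setOf_eq, Pi.add_apply, hc]
    constructor
    · intro h i hi; rw [h i hi, if_pos hi]; ring
    · intro h i hi; have h2 := h i hi; rw [if_pos hi] at h2
      linear_combination (norm := ring_nf) h2
  rw [h, measure_preimage_add]

lemma zmod2_cases : ∀ x : ZMod 2, x = 0 ∨ x = 1 := by decide

lemma cyl_value (S : Finset ℕ) (b : ℕ → ZMod 2) : P (cyl S b) = 2⁻¹ ^ S.card := by
  classical
  induction S using Finset.induction_on generalizing b with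
  | empty => simp [cyl]
  | @insert j S hj ih =>
    have hsplit : cyl S b = cyl (insert j S) (Function.update b j 0)
        ∪ cyl (insert j S) (Function.update b j 1) := by
      ext ω
      simp only [cyl, Set.mem_union, Set.mem_setOf_eq, Finset.mem_insert]
      constructor
      · intro h
        rcases zmod2_cases (ω j) with h0 | h1
        · left; rintro i (rfl | hi)
          · rw [h0, Function.update_self]
          · rw [h i hi, Function.update_of_ne (by rintro rfl; exact hj hi)]
        · right; rintro i (rfl | hi)
          · rw [h1, Function.update_self]
          · rw [h i hi, Function.update_of_ne (by rintro rfl; exact hj hi)]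
      · rintro (h | h) i hi
        · rw [h i (Or.inr hi), Function.update_of_ne (by rintro rfl; exact hj hi)]
        · rw [h i (Or.inr hi), Function.update_of_ne (by rintro rfl; exact hj hi)]
    have hdisj : Disjoint (cyl (insert j S) (Function.update b j 0))
        (cyl (insert j S) (Function.update b j 1)) := by
      rw [Set.disjoint_left]
      intro ω h0 h1
      have e0 := h0 j (Finset.mem_insert_self j S)
      have e1 := h1 j (Finset.mem_insert_self j S)
      rw [Function.update_self] at e0 e1
      rw [e0] at e1; exact absurd e1 (by decide)
    have key : P (cyl S b) = 2 * P (cyl (insert j S) b) := by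
      rw [hsplit, measure_union hdisj (cyl_meas _ _),
        cyl_translate (insert j S) (Function.update b j 0) b,
        cyl_translate (insert j S) (Function.update b j 1) b]
      ring
    have hb : P (cyl S b) = 2⁻¹ ^ S.card := ih b
    rw [hb] at key
    rw [Finset.card_insert_of_notMem hj, pow_succ]
    have h2 : (2 : ENNReal) ≠ 0 := by norm_num
    have h2t : (2 : ENNReal) ≠ ⊤ := by norm_num
    calc P (cyl (insert j S) b) = 2⁻¹ * (2 * P (cyl (insert j S) b)) := by
          rw [← mul_assoc, ENNReal.inv_mul_cancel h2 h2t, one_mul]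
      _ = 2⁻¹ * 2⁻¹ ^ S.card := by rw [← key]
      _ = 2⁻¹ ^ S.card * 2⁻¹ := by ring

def PS (i : ℕ) : Set (Set G) := {s | ∃ a : ZMod 2, s = (fun ω : G => ω i) ⁻¹' {a}}

lemma PS_pi (i : ℕ) : IsPiSystem (PS i) := by
  rintro s ⟨a, rfl⟩ t ⟨a', rfl⟩ hne
  obtain ⟨ω, h1, h2⟩ := hne
  simp only [Set.mem_preimage, Set.mem_singleton_iff] at h1 h2
  have : a = a' := by rw [← h1, ← h2]
  subst this
  exact ⟨a, by simp⟩

lemma PS_gen (i : ℕ) :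
    MeasurableSpace.comap (fun ω : G => ω i) inferInstance
      = MeasurableSpace.generateFrom (PS i) := by
  apply le_antisymm
  · rintro s ⟨s', _, rfl⟩
    have : (fun ω : G => ω i) ⁻¹' s' = ⋃ a ∈ s', (fun ω : G => ω i) ⁻¹' {a} := by
      ext ω; simp
    rw [this]
    exact MeasurableSet.biUnion s'.to_countable fun a _ =>
      MeasurableSpace.measurableSet_generateFrom ⟨a, rfl⟩
  · apply MeasurableSpace.generateFrom_le
    rintro s ⟨a, rfl⟩
    exact ⟨{a}, MeasurableSet.of_discrete, rfl⟩

lemma coords_indep : iIndepFun (fun (i : ℕ) (ω : G) => ω i) P := by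
  classical
  rw [iIndepFun_iff_iIndep]
  refine iIndepSets.iIndep (fun i => ?hle) PS PS_pi PS_gen ?hind
  case hle => rw [PS_gen]; apply MeasurableSpace.generateFrom_le
              rintro s ⟨a, rfl⟩
              exact (meas_coord i) MeasurableSet.of_discrete
  rw [iIndepSets_iff]
  intro s f hf
  choose a ha using hf
  have hInt : (⋂ i ∈ s, f i) = cyl s (fun i => if h : i ∈ s then a i h else 0) := by
    ext ω
    simp only [Set.mem_iInter, cyl, Set.mem_setOf_eq]
    constructor
    · intro h i hi
      have := h i hi; rw [ha i hi] at this
      simpa [dif_pos hi] using this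
    · intro h i hi
      rw [ha i hi]
      have := h i hi; simp only [dif_pos hi] at this
      simpa using this
  rw [hInt, cyl_value]
  rw [Finset.prod_congr rfl (fun i hi => ?_)]
  · rw [Finset.prod_const]
  · rw [ha i hi]
    have : (fun ω : G => ω i) ⁻¹' {a i hi} = cyl {i} (fun _ => a i hi) := by
      ext ω; simp [cyl]
    rw [this, cyl_value]
    simp

def jmp : ZMod 2 → ℝ := fun a => if a = 0 then 1 else Real.sqrt 2

def eta : ℕ → G → ℝ := fun i ω => jmp (ω i)

lemma meas_jmp : Measurable jmp := measurable_of_countable _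

lemma meas_eta (i : ℕ) : Measurable (eta i) := meas_jmp.comp (meas_coord i)

lemma coord_single_val (i : ℕ) (a : ZMod 2) : P ((fun ω : G => ω i) ⁻¹' {a}) = 2⁻¹ := by
  have : (fun ω : G => ω i) ⁻¹' {a} = cyl {i} (fun _ => a) := by ext ω; simp [cyl]
  rw [this, cyl_value]; simp

open scoped Classical in
lemma coord_preimage_val (i : ℕ) (s : Set (ZMod 2)) :
    P ((fun ω : G => ω i) ⁻¹' s) =
      (if (0 : ZMod 2) ∈ s then (2⁻¹ : ENNReal) else 0) +
        (if (1 : ZMod 2) ∈ s then (2⁻¹ : ENNReal) else 0) := by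
  classical
  by_cases h0 : (0 : ZMod 2) ∈ s <;> by_cases h1 : (1 : ZMod 2) ∈ s <;>
    simp only [h0, h1, if_true, if_false]
  · have : (fun ω : G => ω i) ⁻¹' s = Set.univ := by
      ext ω; simp only [Set.mem_preimage, Set.mem_univ, iff_true]
      rcases zmod2_cases (ω i) with h | h <;> rw [h] <;> assumption
    rw [this, measure_univ]
    exact ENNReal.inv_two_add_inv_two.symm
  · have : (fun ω : G => ω i) ⁻¹' s = (fun ω : G => ω i) ⁻¹' {0} := by
      ext ω; simp only [Set.mem_preimage, Set.mem_singleton_iff]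
      constructor
      · intro h; rcases zmod2_cases (ω i) with hh | hh
        · exact hh
        · rw [hh] at h; exact absurd h h1
      · intro h; rw [h]; exact h0
    rw [this, coord_single_val]; simp
  · have : (fun ω : G => ω i) ⁻¹' s = (fun ω : G => ω i) ⁻¹' {1} := by
      ext ω; simp only [Set.mem_preimage, Set.mem_singleton_iff]
      constructor
      · intro h; rcases zmod2_cases (ω i) with hh | hh
        · rw [hh] at h; exact absurd h h0
        · exact hh
      · intro h; rw [h]; exact h1
    rw [this, coord_single_val]; simp
  · have : (fun ω : G => ω i) ⁻¹' s = ∅ := by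
      ext ω; simp only [Set.mem_preimage, Set.mem_empty_iff_false, iff_false]
      intro h; rcases zmod2_cases (ω i) with hh | hh
      · rw [hh] at h; exact h0 h
      · rw [hh] at h; exact h1 h
    rw [this]; simp

lemma map_coord (i : ℕ) : P.map (fun ω : G => ω i) = P.map (fun ω : G => ω 0) := by
  ext s hs
  rw [Measure.map_apply (meas_coord i) hs, Measure.map_apply (meas_coord 0) hs,
    coord_preimage_val, coord_preimage_val]

lemma eta_ident (i : ℕ) : P.map (eta i) = P.map (eta 0) := by
  have h1 : eta i = jmp ∘ (fun ω : G => ω i) := rfl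
  have h2 : eta 0 = jmp ∘ (fun ω : G => ω 0) := rfl
  rw [h1, h2, ← Measure.map_map meas_jmp (meas_coord i),
    ← Measure.map_map meas_jmp (meas_coord 0), map_coord]

lemma eta_indep : iIndepFun eta P :=
  coords_indep.comp (fun _ => jmp) (fun _ => meas_jmp)

lemma one_le_sqrt2 : (1 : ℝ) ≤ Real.sqrt 2 := by
  rw [show (1:ℝ) = Real.sqrt 1 from Real.sqrt_one.symm]
  exact Real.sqrt_le_sqrt (by norm_num)

lemma one_le_eta (i : ℕ) (ω : G) : 1 ≤ eta i ω := by
  unfold eta jmp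
  split
  · exact le_refl 1
  · exact one_le_sqrt2

lemma eta_le (i : ℕ) (ω : G) : eta i ω ≤ Real.sqrt 2 := by
  unfold eta jmp
  split
  · exact one_le_sqrt2
  · exact le_refl _

lemma eta_int : Integrable (eta 0) P := by
  refine ⟨(meas_eta 0).aestronglyMeasurable, ?_⟩
  apply HasFiniteIntegral.mono' (g := fun _ => Real.sqrt 2) (hasFiniteIntegral_const _)
  filter_upwards with ω
  rw [Real.norm_eq_abs, abs_of_nonneg (le_trans one_pos.le (one_le_eta 0 ω))]
  exact eta_le 0 ω

lemma eta_mean_pos : 0 < ∫ ω, eta 0 ω ∂P := by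
  have h : (1 : ℝ) ≤ ∫ ω, eta 0 ω ∂P := by
    have := integral_mono (integrable_const (1:ℝ)) eta_int (fun ω => one_le_eta 0 ω)
    simpa using this
  linarith

lemma eta_nonarith (d : ℝ) (_hd : 0 < d) : P {ω | ∃ k : ℤ, eta 0 ω = d * k} ≠ 1 := by
  intro hP
  by_cases h1 : ∃ k : ℤ, (1 : ℝ) = d * k
  · by_cases h2 : ∃ k : ℤ, Real.sqrt 2 = d * k
    · obtain ⟨k1, hk1⟩ := h1
      obtain ⟨k2, hk2⟩ := h2
      have hk1ne : (k1 : ℝ) ≠ 0 := by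
        intro h; rw [h, mul_zero] at hk1; exact one_ne_zero hk1
      have key : Real.sqrt 2 * (k1 : ℝ) = (k2 : ℝ) := by
        linear_combination (k1 : ℝ) * hk2 - (k2 : ℝ) * hk1
      have : Real.sqrt 2 = ((k2 : ℚ) / (k1 : ℚ) : ℚ) := by
        push_cast
        rw [eq_div_iff hk1ne, key]
      exact irrational_sqrt_two ⟨_, this.symm⟩
    · have hsub : {ω : G | ∃ k : ℤ, eta 0 ω = d * k} ⊆ (fun ω : G => ω 0) ⁻¹' {0} := by
        intro ω ⟨k, hk⟩
        simp only [Set.mem_preimage, Set.mem_singleton_iff]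
        by_contra hne
        have : eta 0 ω = Real.sqrt 2 := by unfold eta jmp; rw [if_neg hne]
        exact h2 ⟨k, this ▸ hk⟩
      have := measure_mono (μ := P) hsub
      rw [hP, coord_single_val] at this
      exact absurd this (not_le.mpr (ENNReal.inv_lt_one.mpr ENNReal.one_lt_two))
  · have hsub : {ω : G | ∃ k : ℤ, eta 0 ω = d * k} ⊆ (fun ω : G => ω 0) ⁻¹' {1} := by
      intro ω ⟨k, hk⟩
      simp only [Set.mem_preimage, Set.mem_singleton_iff]
      by_contra hne
      have h0 : ω 0 = 0 := by
        rcases zmod2_cases (ω 0) with h | h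
        · exact h
        · exact absurd h hne
      have : eta 0 ω = 1 := by unfold eta jmp; rw [if_pos h0]
      exact h1 ⟨k, this ▸ hk⟩
    have := measure_mono (μ := P) hsub
    rw [hP, coord_single_val] at this
    exact absurd this (not_le.mpr (ENNReal.inv_lt_one.mpr ENNReal.one_lt_two))

def DD : Set ℝ := {x | ∃ a b : ℕ, x = (a : ℝ) + (b : ℝ) * Real.sqrt 2}

def tf : ℝ → ℝ := fun y => Metric.infDist y DD * (8 * (y + 4) ^ 2)

lemma DD_nonempty : DD.Nonempty := ⟨0, 0, 0, by simp⟩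

lemma tf_cont : Continuous tf :=
  (Metric.continuous_infDist_pt DD).mul (by continuity)

lemma tf_meas : Measurable tf := tf_cont.measurable

lemma tf_nonneg (y : ℝ) : 0 ≤ tf y :=
  mul_nonneg Metric.infDist_nonneg (by positivity)

lemma tf_zero_on_DD {x : ℝ} (hx : x ∈ DD) : tf x = 0 := by
  unfold tf
  rw [Metric.infDist_zero_of_mem hx, zero_mul]

def Phi (N : ℕ) : Finset ℝ :=
  ((Finset.range (N + 3)) ×ˢ (Finset.range (N + 3))).image
    (fun p => (p.1 : ℝ) + (p.2 : ℝ) * Real.sqrt 2)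

lemma mem_Phi {N : ℕ} {x : ℝ} (hx : x ∈ DD) (hle : x ≤ (N : ℝ) + 2) : x ∈ Phi N := by
  obtain ⟨a, b, rfl⟩ := hx
  have hs : (1:ℝ) ≤ Real.sqrt 2 := one_le_sqrt2
  have ha : (a : ℝ) ≤ (N : ℝ) + 2 := by nlinarith [Nat.cast_nonneg (α := ℝ) b]
  have hb : (b : ℝ) ≤ (N : ℝ) + 2 := by
    nlinarith [Nat.cast_nonneg (α := ℝ) a, Nat.cast_nonneg (α := ℝ) b]
  have ha2 : (a : ℝ) < ((N + 3 : ℕ) : ℝ) := by push_cast; linarith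
  have hb2 : (b : ℝ) < ((N + 3 : ℕ) : ℝ) := by push_cast; linarith
  have ha' : a < N + 3 := by exact_mod_cast ha2
  have hb' : b < N + 3 := by exact_mod_cast hb2
  exact Finset.mem_image.2 ⟨(a, b), Finset.mem_product.2
    ⟨Finset.mem_range.2 ha', Finset.mem_range.2 hb'⟩, rfl⟩

lemma Phi_card (N : ℕ) : (Phi N).card ≤ (N + 3) ^ 2 := by
  calc (Phi N).card ≤ ((Finset.range (N + 3)) ×ˢ (Finset.range (N + 3))).card :=
        Finset.card_image_le
    _ = (N + 3) ^ 2 := by simp [Finset.card_product, sq]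

lemma key_block (N : ℕ) :
    1 ≤ ∫⁻ y in Set.Ico (N : ℝ) ((N : ℝ) + 1), ENNReal.ofReal (tf y) := by
  set K : ℝ := ((N : ℝ) + 3) ^ 2 with hK
  have hKpos : 0 < K := by positivity
  set r : ℝ := (4 * K)⁻¹ with hr
  have hrpos : 0 < r := by positivity
  have hr1 : r ≤ 1 := by
    rw [hr, inv_le_one_iff₀]
    right
    nlinarith [Nat.cast_nonneg (α := ℝ) N]
  set U : Set ℝ := ⋃ d ∈ Phi N, Metric.ball d r with hU
  have hUmeas : MeasurableSet U :=
    (Phi N).measurableSet_biUnion (fun d _ => measurableSet_ball)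
  have hUvol : volume U ≤ ENNReal.ofReal (1/2) := by
    have hhalf : K * (2 * r) = 1/2 := by rw [hr]; field_simp; ring
    calc volume U ≤ ∑ d ∈ Phi N, volume (Metric.ball d r) := measure_biUnion_finset_le _ _
      _ = (Phi N).card * ENNReal.ofReal (2 * r) := by
          simp [Real.volume_ball, Finset.sum_const, nsmul_eq_mul]
      _ ≤ ENNReal.ofReal K * ENNReal.ofReal (2 * r) := by
          apply mul_le_mul' ?_ le_rfl
          rw [← ENNReal.ofReal_natCast]
          apply ENNReal.ofReal_le_ofReal
          calc ((Phi N).card : ℝ) ≤ (((N+3)^2 : ℕ) : ℝ) := by exact_mod_cast Phi_card N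
            _ = K := by push_cast [hK]; ring
      _ = ENNReal.ofReal (K * (2 * r)) := (ENNReal.ofReal_mul hKpos.le).symm
      _ = ENNReal.ofReal (1/2) := by rw [hhalf]
  set A : Set ℝ := Set.Ico (N : ℝ) ((N : ℝ) + 1) \ U with hA
  have hAvol : ENNReal.ofReal (1/2) ≤ volume A := by
    have h1 : volume (Set.Ico (N : ℝ) ((N : ℝ) + 1)) = 1 := by
      rw [Real.volume_Ico]; simp
    calc ENNReal.ofReal (1/2) = 1 - ENNReal.ofReal (1/2) := by
          rw [← ENNReal.ofReal_one, ← ENNReal.ofReal_sub _ (by norm_num)]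
          norm_num
      _ ≤ volume (Set.Ico (N : ℝ) ((N : ℝ) + 1)) - volume U := by
          rw [h1]; exact tsub_le_tsub le_rfl hUvol
      _ ≤ volume A := le_measure_diff
  have htA : ∀ y ∈ A, 2 ≤ tf y := by
    intro y hy
    obtain ⟨hyIco, hyU⟩ := hy
    have hdist : ∀ z ∈ DD, r ≤ dist y z := by
      intro z hz
      by_cases hzle : z ≤ (N : ℝ) + 2
      · have hzPhi : z ∈ Phi N := mem_Phi hz hzle
        have : y ∉ Metric.ball z r := fun hmem => hyU (Set.mem_biUnion hzPhi hmem)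
        rw [Metric.mem_ball, not_lt] at this
        exact this
      · push_neg at hzle
        have hy1 : y < (N : ℝ) + 1 := hyIco.2
        calc r ≤ 1 := hr1
          _ ≤ z - y := by linarith
          _ ≤ |y - z| := by rw [abs_sub_comm]; exact le_abs_self _
          _ = dist y z := (Real.dist_eq y z).symm
    have hinf : r ≤ Metric.infDist y DD := by
      by_contra h
      push_neg at h
      obtain ⟨z, hz, hdz⟩ := (Metric.infDist_lt_iff DD_nonempty).1 h
      exact absurd hdz (not_lt.2 (hdist z hz))
    have hfac : 8 * K ≤ 8 * (y + 4)^2 := by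
      have hyN : (N : ℝ) ≤ y := hyIco.1
      have : ((N:ℝ) + 3)^2 ≤ (y + 4)^2 := by nlinarith [Nat.cast_nonneg (α := ℝ) N]
      nlinarith
    have h2r : (2:ℝ) = r * (8 * K) := by rw [hr]; field_simp; ring
    calc (2:ℝ) = r * (8 * K) := h2r
      _ ≤ Metric.infDist y DD * (8 * (y + 4)^2) :=
          mul_le_mul hinf hfac (by positivity) Metric.infDist_nonneg
      _ = tf y := rfl
  calc (1 : ENNReal) = ENNReal.ofReal 2 * ENNReal.ofReal (1/2) := by
        rw [← ENNReal.ofReal_mul (by norm_num)]; norm_num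
    _ ≤ ENNReal.ofReal 2 * volume A := by gcongr
    _ = ∫⁻ _ in A, ENNReal.ofReal 2 := (setLIntegral_const A _).symm
    _ ≤ ∫⁻ y in A, ENNReal.ofReal (tf y) :=
        setLIntegral_mono (ENNReal.measurable_ofReal.comp tf_meas)
          (fun y hy => ENNReal.ofReal_le_ofReal (htA y hy))
    _ ≤ ∫⁻ y in Set.Ico (N : ℝ) ((N : ℝ) + 1), ENNReal.ofReal (tf y) :=
        lintegral_mono_set Set.diff_subset

lemma meas_rwalk (n : ℕ) : Measurable (rwalk eta n) := by
  unfold rwalk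
  exact Finset.measurable_sum _ (fun i _ => meas_eta i)

lemma rwalk_mem_DD (n : ℕ) (ω : G) : rwalk eta n ω ∈ DD := by
  induction n with
  | zero => exact ⟨0, 0, by simp [rwalk]⟩
  | succ n ih =>
    have hsum : rwalk eta (n + 1) ω = rwalk eta n ω + eta n ω := Finset.sum_range_succ _ n
    obtain ⟨a, b, hab⟩ := ih
    by_cases h : ω n = 0
    · refine ⟨a + 1, b, ?_⟩
      rw [hsum, hab]
      unfold eta jmp
      rw [if_pos h]
      push_cast; ring
    · refine ⟨a, b + 1, ?_⟩
      rw [hsum, hab]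
      unfold eta jmp
      rw [if_neg h]
      push_cast; ring

lemma renewal_int_zero :
    (∫⁻ y in Set.Ici (0:ℝ), ENNReal.ofReal (tf y) ∂(renewalMeasure P eta)) = 0 := by
  unfold renewalMeasure
  rw [Measure.restrict_sum _ measurableSet_Ici, lintegral_sum_measure]
  rw [ENNReal.tsum_eq_zero]
  intro n
  refine le_antisymm ?_ zero_le
  calc ∫⁻ y in Set.Ici (0:ℝ), ENNReal.ofReal (tf y) ∂(P.map (rwalk eta n))
      ≤ ∫⁻ y, ENNReal.ofReal (tf y) ∂(P.map (rwalk eta n)) := setLIntegral_le_lintegral _ _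
    _ = ∫⁻ ω, ENNReal.ofReal (tf (rwalk eta n ω)) ∂P :=
        lintegral_map (ENNReal.measurable_ofReal.comp tf_meas) (meas_rwalk n)
    _ = 0 := by
        have h0 : ∀ ω : G, ENNReal.ofReal (tf (rwalk eta n ω)) = 0 := fun ω => by
          rw [tf_zero_on_DD (rwalk_mem_DD n ω), ENNReal.ofReal_zero]
        simp only [h0, lintegral_zero]

lemma lebesgue_int_top : (∫⁻ y in Set.Ici (0:ℝ), ENNReal.ofReal (tf y)) = ⊤ := by
  have hIco : ∀ M : ℕ,
      (M : ENNReal) ≤ ∫⁻ y in Set.Ico (0:ℝ) (M : ℝ), ENNReal.ofReal (tf y) := by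
    intro M
    induction M with
    | zero => simp
    | succ M ih =>
      have hunion : Set.Ico (0:ℝ) (M:ℝ) ∪ Set.Ico (M:ℝ) ((M:ℝ)+1) = Set.Ico (0:ℝ) ((M:ℝ)+1) :=
        Set.Ico_union_Ico_eq_Ico (Nat.cast_nonneg M) (by linarith)
      have hcast : ((M + 1 : ℕ) : ℝ) = (M : ℝ) + 1 := by push_cast; ring
      rw [hcast, ← hunion,
        lintegral_union measurableSet_Ico Set.Ico_disjoint_Ico_same]
      push_cast
      exact add_le_add ih (key_block M)
  by_contra h
  obtain ⟨M, hM⟩ := ENNReal.exists_nat_gt h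
  have : (M : ENNReal) ≤ ∫⁻ y in Set.Ici (0:ℝ), ENNReal.ofReal (tf y) :=
    le_trans (hIco M) (lintegral_mono_set (fun y hy => hy.1))
  exact absurd hM (not_lt.2 this)

end Cex


/-- there exist a continuous function `t : ℝ⁺ → ℝ⁺` and a renewal process
with nonarithmetic jump distribution such that `∫_{[0,∞)} t(y) dV*(y) < ∞` and yet
`∫₀^∞ t(y) dy = ∞`. -/
theorem exists_finite_renewal_integral_not_lebesgue :
    ∃ (Ω : Type) (_ : MeasurableSpace Ω) (P : Measure Ω) (_ : IsProbabilityMeasure P)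
      (η : ℕ → Ω → ℝ) (t : ℝ → ℝ),
      RenewalSetup P η ∧ Continuous t ∧ (∀ y, 0 ≤ t y) ∧
      (∫⁻ y in Set.Ici (0 : ℝ), ENNReal.ofReal (t y) ∂(renewalMeasure P η)) ≠ ⊤ ∧
      (∫⁻ y in Set.Ici (0 : ℝ), ENNReal.ofReal (t y)) = ⊤ := by
  refine ⟨Cex.G, Cex.mG, Cex.P, Cex.Pprob, Cex.eta, Cex.tf, ?_, Cex.tf_cont, Cex.tf_nonneg,
    ?_, Cex.lebesgue_int_top⟩
  · exact ⟨Cex.meas_eta, Cex.eta_indep, Cex.eta_ident,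
      fun i => Filter.Eventually.of_forall (fun ω => le_trans zero_le_one (Cex.one_le_eta i ω)),
      Cex.eta_int, Cex.eta_mean_pos, Cex.eta_nonarith⟩
  · rw [Cex.renewal_int_zero]
    exact ENNReal.zero_ne_top

end
end
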